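/- arXiv:2201.02579 — 9 statements merged into one kernel-verified Lean document; each statement's English description precedes it below -/
import Mathlib

section
/- Let n ≥ 4, let C be the (n−1)×(n−1) circulant matrix circ(1,0,…,0,1), let M = [[𝟏ᵀ, 0ᵀ],[I_{n−1}, C]], X = 2(CCᵀ + I_{n−1})⁻¹((n−1)I_{n−1} − J_{n−1}), Y = J_{n−1} + CᵀX, and H = (1/(2(n−1))) · [[2·𝟏, X],[−𝟏, Y]]. Then M H = I_n; in particular H is a right inverse of M. -/
open Matrix

noncomputable section

/-- The circulant matrix of order `m` with defining vector `v`: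
its `(i,j)` entry is `v ((j - i) mod m)`. -/
def circ {m : ℕ} (v : Fin m → ℝ) : Matrix (Fin m) (Fin m) ℝ :=
  Matrix.of fun i j => v (j - i)

/-- The `m × m` all-ones matrix. -/
def Jmat (m : ℕ) : Matrix (Fin m) (Fin m) ℝ := Matrix.of fun _ _ => 1

lemma sum_ite_val {m : ℕ} (a : ℕ) (ha : a < m) :
    ∑ k : Fin m, (if (k : ℕ) = a then (1:ℝ) else 0) = 1 := by
  have h : ∀ k : Fin m, ((k : ℕ) = a) ↔ (k = ⟨a, ha⟩) := fun k => by
    constructor <;> intro h <;> simp_all [Fin.ext_iff]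
  simp only [h]
  simp

lemma sum_v {m : ℕ} (a : ℕ) (ha : a < m) (ha0 : a ≠ 0) :
    ∑ k : Fin m, (if (k : ℕ) = 0 ∨ (k : ℕ) = a then (1:ℝ) else 0) = 2 := by
  have hsplit : ∀ k : Fin m, (if (k : ℕ) = 0 ∨ (k : ℕ) = a then (1:ℝ) else 0)
      = (if (k : ℕ) = 0 then (1:ℝ) else 0) + (if (k : ℕ) = a then (1:ℝ) else 0) := by
    intro k
    by_cases h0 : (k : ℕ) = 0 <;> by_cases h1 : (k : ℕ) = a <;> simp_all
  rw [Finset.sum_congr rfl (fun k _ => hsplit k), Finset.sum_add_distrib,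
    sum_ite_val 0 (by omega), sum_ite_val a ha]
  norm_num

theorem wheel_incidence_right_inverse (n : ℕ) (hn : 4 ≤ n)
    (C X Y : Matrix (Fin (n-1)) (Fin (n-1)) ℝ)
    (hC : C = circ (fun k => if k.val = 0 ∨ k.val = n - 2 then (1:ℝ) else 0))
    (hX : X = (2:ℝ) • ((C * Cᵀ + 1)⁻¹ * (((n:ℝ) - 1) • (1 : Matrix (Fin (n-1)) (Fin (n-1)) ℝ) - Jmat (n-1))))
    (hY : Y = Jmat (n-1) + Cᵀ * X)
    (M : Matrix (Fin 1 ⊕ Fin (n-1)) (Fin (n-1) ⊕ Fin (n-1)) ℝ)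
    (hM : M = Matrix.fromBlocks (Matrix.of fun _ _ => 1) 0 1 C)
    (H : Matrix (Fin (n-1) ⊕ Fin (n-1)) (Fin 1 ⊕ Fin (n-1)) ℝ)
    (hH : H = (1 / (2 * ((n:ℝ) - 1))) •
      Matrix.fromBlocks (Matrix.of fun _ _ => 2) X (Matrix.of fun _ _ => -1) Y) :
    M * H = 1 := by
  haveI : NeZero (n - 1) := ⟨by omega⟩
  have hcast : ((n - 1 : ℕ) : ℝ) = (n:ℝ) - 1 := by
    rw [Nat.cast_sub (by omega)]; norm_num
  have hc0 : (n:ℝ) - 1 ≠ 0 := by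
    have h4 : (4:ℝ) ≤ (n:ℝ) := by exact_mod_cast hn
    linarith
  -- sum of the defining vector
  have hvsum : ∑ k : Fin (n-1), (if (k : ℕ) = 0 ∨ (k : ℕ) = n - 2 then (1:ℝ) else 0) = 2 :=
    sum_v (n-2) (by omega) (by omega)
  -- row and column sums of C
  have hrow : ∀ i, ∑ j, C i j = 2 := by
    intro i
    rw [hC]
    simp only [circ, Matrix.of_apply]
    rw [Fintype.sum_equiv (Equiv.subRight i)
      (fun j => if ((j - i : Fin (n-1)) : ℕ) = 0 ∨ ((j - i : Fin (n-1)) : ℕ) = n - 2 then (1:ℝ) else 0)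
      (fun k => if (k : ℕ) = 0 ∨ (k : ℕ) = n - 2 then (1:ℝ) else 0) (fun j => rfl)]
    exact hvsum
  have hcol : ∀ j, ∑ i, C i j = 2 := by
    intro j
    rw [hC]
    simp only [circ, Matrix.of_apply]
    rw [Fintype.sum_equiv (Equiv.subLeft j)
      (fun i => if ((j - i : Fin (n-1)) : ℕ) = 0 ∨ ((j - i : Fin (n-1)) : ℕ) = n - 2 then (1:ℝ) else 0)
      (fun k => if (k : ℕ) = 0 ∨ (k : ℕ) = n - 2 then (1:ℝ) else 0) (fun i => rfl)]
    exact hvsum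
  set u : Matrix (Fin 1) (Fin (n-1)) ℝ := Matrix.of fun _ _ => 1 with hu
  set A : Matrix (Fin (n-1)) (Fin (n-1)) ℝ := C * Cᵀ + 1 with hA
  set B : Matrix (Fin (n-1)) (Fin (n-1)) ℝ :=
    ((n:ℝ) - 1) • (1 : Matrix (Fin (n-1)) (Fin (n-1)) ℝ) - Jmat (n-1) with hB
  -- invertibility of A
  have hpd : A.PosDef := by
    have h1 : (C * Cᵀ).PosSemidef := by
      have := Matrix.posSemidef_self_mul_conjTranspose C
      rwa [Matrix.conjTranspose_eq_transpose_of_trivial] at this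
    exact Matrix.PosDef.posSemidef_add h1 Matrix.PosDef.one
  have hAunit : IsUnit A.det := hpd.det_pos.ne'.isUnit
  have hAinv : A * A⁻¹ = 1 := Matrix.mul_nonsing_inv A hAunit
  -- u times things
  have huC : u * C = (2:ℝ) • u := by
    ext i j
    simp only [Matrix.mul_apply, Matrix.smul_apply, Matrix.of_apply, hu, one_mul,
      smul_eq_mul, mul_one]
    exact hcol j
  have huCT : u * Cᵀ = (2:ℝ) • u := by
    ext i j
    simp only [Matrix.mul_apply, Matrix.smul_apply, Matrix.of_apply, hu, one_mul,
      Matrix.transpose_apply, smul_eq_mul, mul_one]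
    exact hrow j
  have huA : u * A = (5:ℝ) • u := by
    rw [hA, Matrix.mul_add, Matrix.mul_one, ← Matrix.mul_assoc, huC, Matrix.smul_mul, huCT]
    module
  have huAinv : u * A⁻¹ = (5⁻¹:ℝ) • u := by
    have h5 : (5:ℝ) • (u * A⁻¹) = u := by
      rw [← Matrix.smul_mul, ← huA, Matrix.mul_assoc, hAinv, Matrix.mul_one]
    calc u * A⁻¹ = (5⁻¹:ℝ) • ((5:ℝ) • (u * A⁻¹)) := by rw [smul_smul]; norm_num
      _ = (5⁻¹:ℝ) • u := by rw [h5]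
  have huJ : u * Jmat (n-1) = ((n:ℝ) - 1) • u := by
    ext i j
    simp only [Matrix.mul_apply, Matrix.smul_apply, Matrix.of_apply, hu, Jmat, one_mul,
      smul_eq_mul, mul_one, Finset.sum_const, Finset.card_univ, Fintype.card_fin,
      nsmul_eq_mul]
    rw [hcast]
  have huB : u * B = 0 := by
    rw [hB, Matrix.mul_sub, Matrix.mul_smul, Matrix.mul_one, huJ, sub_self]
  have huX : u * X = 0 := by
    rw [hX, Matrix.mul_smul, ← Matrix.mul_assoc, huAinv, Matrix.smul_mul, huB,
      smul_zero, smul_zero]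
  -- block computations
  have hTL : u * (Matrix.of fun _ _ => (2:ℝ) : Matrix (Fin (n-1)) (Fin 1) ℝ) + (0 : Matrix (Fin 1) (Fin (n-1)) ℝ) *
      (Matrix.of fun _ _ => (-1:ℝ) : Matrix (Fin (n-1)) (Fin 1) ℝ) = (2 * ((n:ℝ) - 1)) • (1 : Matrix (Fin 1) (Fin 1) ℝ) := by
    rw [Matrix.zero_mul, add_zero]
    ext i j
    fin_cases i; fin_cases j
    simp only [Matrix.mul_apply, Matrix.of_apply, hu, one_mul, Finset.sum_const,
      Finset.card_univ, Fintype.card_fin, nsmul_eq_mul, Matrix.smul_apply,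
      Matrix.one_apply_eq, smul_eq_mul, mul_one]
    rw [hcast]; ring
  have hTR : u * X + (0 : Matrix (Fin 1) (Fin (n-1)) ℝ) * Y = 0 := by
    rw [huX, Matrix.zero_mul, add_zero]
  have hBL : (1 : Matrix (Fin (n-1)) (Fin (n-1)) ℝ) *
      (Matrix.of fun _ _ => (2:ℝ) : Matrix (Fin (n-1)) (Fin 1) ℝ) +
      C * (Matrix.of fun _ _ => (-1:ℝ) : Matrix (Fin (n-1)) (Fin 1) ℝ) = 0 := by
    rw [Matrix.one_mul]
    ext i j
    simp only [Matrix.add_apply, Matrix.of_apply, Matrix.mul_apply, Matrix.zero_apply,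
      mul_neg, mul_one]
    rw [Finset.sum_neg_distrib, hrow i]
    ring
  have hCJ : C * Jmat (n-1) = (2:ℝ) • Jmat (n-1) := by
    ext i j
    simp only [Matrix.mul_apply, Matrix.smul_apply, Matrix.of_apply, Jmat, mul_one,
      smul_eq_mul]
    exact hrow i
  have hAX : A * X = (2:ℝ) • B := by
    rw [hX, Matrix.mul_smul, ← Matrix.mul_assoc, hAinv, Matrix.one_mul]
  have hBR : (1 : Matrix (Fin (n-1)) (Fin (n-1)) ℝ) * X + C * Y =
      (2 * ((n:ℝ) - 1)) • (1 : Matrix (Fin (n-1)) (Fin (n-1)) ℝ) := by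
    rw [Matrix.one_mul, hY, Matrix.mul_add, ← Matrix.mul_assoc]
    have hstep : X + (C * Jmat (n-1) + C * Cᵀ * X) = A * X + C * Jmat (n-1) := by
      rw [hA, Matrix.add_mul, Matrix.one_mul]
      abel
    rw [hstep, hAX, hCJ, hB]
    module
  -- assemble
  rw [hM, hH, Matrix.mul_smul, Matrix.fromBlocks_multiply, hTL, hTR, hBL, hBR]
  rw [show Matrix.fromBlocks ((2 * ((n:ℝ) - 1)) • (1 : Matrix (Fin 1) (Fin 1) ℝ)) 0 0
      ((2 * ((n:ℝ) - 1)) • (1 : Matrix (Fin (n-1)) (Fin (n-1)) ℝ)) =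
      (2 * ((n:ℝ) - 1)) • (1 : Matrix (Fin 1 ⊕ Fin (n-1)) (Fin 1 ⊕ Fin (n-1)) ℝ) from by
    rw [← Matrix.fromBlocks_one, Matrix.fromBlocks_smul]; simp]
  rw [smul_smul, one_div, inv_mul_cancel₀ (mul_ne_zero two_ne_zero hc0), one_smul]
end
end

section
/- Let n ≥ 4, let C be the (n−1)×(n−1) circulant matrix circ(1,0,…,0,1), let X = 2(CCᵀ + I_{n−1})⁻¹((n−1)I_{n−1} − J_{n−1}), and Y = J_{n−1} + CᵀX. Then 𝟏ᵀX = 0ᵀ and X + C Y = 2(n−1) I_{n−1}. -/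
open Matrix

noncomputable section

theorem wheel_X_rowsum_and_XCY (n : ℕ) (hn : 4 ≤ n)
    (C X Y : Matrix (Fin (n-1)) (Fin (n-1)) ℝ)
    (hC : C = circ (fun k => if k.val = 0 ∨ k.val = n - 2 then (1:ℝ) else 0))
    (hX : X = (2:ℝ) • ((C * Cᵀ + 1)⁻¹ * (((n:ℝ) - 1) • (1 : Matrix (Fin (n-1)) (Fin (n-1)) ℝ) - Jmat (n-1))))
    (hY : Y = Jmat (n-1) + Cᵀ * X) :
    (Matrix.of fun (_ : Fin 1) (_ : Fin (n-1)) => (1:ℝ)) * X = 0 ∧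
      X + C * Y = (2 * ((n:ℝ) - 1)) • (1 : Matrix (Fin (n-1)) (Fin (n-1)) ℝ) := by
  have hcast : ((n - 1 : ℕ) : ℝ) = (n : ℝ) - 1 := by
    have h1 : (1:ℕ) ≤ n := by omega
    push_cast [Nat.cast_sub h1]; ring
  haveI : NeZero (n-1) := ⟨by omega⟩
  set v : Fin (n-1) → ℝ := fun k => if k.val = 0 ∨ k.val = n - 2 then (1:ℝ) else 0 with hv
  set u : Matrix (Fin 1) (Fin (n-1)) ℝ := Matrix.of fun _ _ => 1 with hu
  -- sum of the defining vector is 2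
  have hvsum : ∑ k : Fin (n-1), v k = 2 := by
    let a : Fin (n-1) := ⟨0, by omega⟩
    let b : Fin (n-1) := ⟨n-2, by omega⟩
    have hab : a ≠ b := by
      simp only [a, b, ne_eq, Fin.mk.injEq]
      omega
    have hpt : ∀ k : Fin (n-1), v k = (if k = a then (1:ℝ) else 0) + (if k = b then 1 else 0) := by
      intro k
      have ha : (k = a) ↔ (k:ℕ) = 0 := Fin.ext_iff
      have hb : (k = b) ↔ (k:ℕ) = n - 2 := Fin.ext_iff
      have hne : ¬((k:ℕ) = 0 ∧ (k:ℕ) = n - 2) := by omega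
      by_cases h1 : (k:ℕ) = 0 <;> by_cases h2 : (k:ℕ) = n - 2
      · exact absurd ⟨h1, h2⟩ hne
      all_goals simp [hv, ha, hb, h1, h2, -Fin.val_eq_zero_iff] <;> omega
    rw [Finset.sum_congr rfl (fun k _ => hpt k), Finset.sum_add_distrib]
    simp
    norm_num
  have hcol : ∀ j, ∑ i, C i j = 2 := by
    intro j
    rw [hC]
    calc ∑ i, circ v i j = ∑ i, v (j - i) := rfl
      _ = ∑ k, v k := Fintype.sum_equiv (Equiv.subLeft j) _ _ (fun i => rfl)
      _ = 2 := hvsum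
  have hrow : ∀ i, ∑ j, C i j = 2 := by
    intro i
    rw [hC]
    calc ∑ j, circ v i j = ∑ j, v (j - i) := rfl
      _ = ∑ k, v k := Fintype.sum_equiv (Equiv.subRight i) _ _ (fun j => rfl)
      _ = 2 := hvsum
  have huC : u * C = (2:ℝ) • u := by
    ext x j
    simp [Matrix.mul_apply, hu, hcol j]
  have huCt : u * Cᵀ = (2:ℝ) • u := by
    ext x j
    simp [Matrix.mul_apply, hu, Matrix.transpose_apply, hrow j]
  have huJ : u * Jmat (n-1) = ((n:ℝ) - 1) • u := by
    ext x j
    simp [Matrix.mul_apply, hu, Jmat, ← hcast]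
  have hCJ : C * Jmat (n-1) = (2:ℝ) • Jmat (n-1) := by
    ext i j
    simp [Matrix.mul_apply, Jmat, hrow i]
  have huA : u * (C * Cᵀ + 1) = (5:ℝ) • u := by
    rw [Matrix.mul_add, Matrix.mul_one, ← Matrix.mul_assoc, huC, Matrix.smul_mul, huCt]
    module
  -- invertibility
  have hPSD : (C * Cᵀ).PosSemidef := by
    have h := Matrix.posSemidef_self_mul_conjTranspose C
    simpa using h
  have hPD : (C * Cᵀ + 1).PosDef := Matrix.PosDef.posSemidef_add hPSD Matrix.PosDef.one
  have hdet : IsUnit (C * Cᵀ + 1).det := hPD.det_pos.ne'.isUnit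
  have hAinv : (C * Cᵀ + 1) * (C * Cᵀ + 1)⁻¹ = 1 := Matrix.mul_nonsing_inv _ hdet
  have huAinv : u * (C * Cᵀ + 1)⁻¹ = (5:ℝ)⁻¹ • u := by
    have h := congrArg (fun M => M * (C * Cᵀ + 1)⁻¹) huA
    simp only [Matrix.mul_assoc, hAinv, Matrix.mul_one, Matrix.smul_mul] at h
    have h2 : (5:ℝ)⁻¹ • u = (5:ℝ)⁻¹ • ((5:ℝ) • (u * (C * Cᵀ + 1)⁻¹)) := by rw [← h]
    rw [h2, smul_smul]
    norm_num
  constructor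
  · -- u * X = 0
    rw [hX, Matrix.mul_smul, ← Matrix.mul_assoc, huAinv, Matrix.smul_mul,
      Matrix.mul_sub, Matrix.mul_smul, Matrix.mul_one, huJ]
    simp
  · -- X + C * Y = 2(n-1) • 1
    have hAX : (C * Cᵀ + 1) * X
        = (2:ℝ) • (((n:ℝ) - 1) • (1 : Matrix (Fin (n-1)) (Fin (n-1)) ℝ) - Jmat (n-1)) := by
      rw [hX, Matrix.mul_smul, ← Matrix.mul_assoc, hAinv, Matrix.one_mul]
    have key : X + C * Y = (2:ℝ) • Jmat (n-1) + (C * Cᵀ + 1) * X := by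
      rw [hY, Matrix.mul_add, ← Matrix.mul_assoc, hCJ, Matrix.add_mul, Matrix.one_mul]
      abel
    rw [key, hAX, smul_sub, smul_smul]
    module
end
end

section
/- Let n > 3 be an integer. The inverse of the n×n circulant matrix circ(3,1,0,…,0,1) is the circulant matrix circ(a_0, a_1, …, a_{n−1}) where, for 0 ≤ j ≤ n−1, a_j = (2^{n−j}/√5) · [ (−3+√5)^j / (2^n − (−3+√5)^n) − (−3−√5)^j / (2^n − (−3−√5)^n) ]. -/
open Matrix

noncomputable section

theorem circ_3_1_1_inverse (n : ℕ) (hn : 3 < n)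
    (B : Matrix (Fin n) (Fin n) ℝ)
    (hB : B = circ (fun k : Fin n => if k.val = 0 then (3:ℝ) else
      if k.val = 1 ∨ k.val = n - 1 then 1 else 0)) :
    B⁻¹ = circ (fun j : Fin n => ((2:ℝ) ^ (n - j.val) / Real.sqrt 5) * ((-3 + Real.sqrt 5) ^ j.val / ((2:ℝ) ^ n - (-3 + Real.sqrt 5) ^ n) - (-3 - Real.sqrt 5) ^ j.val / ((2:ℝ) ^ n - (-3 - Real.sqrt 5) ^ n))) := by
  haveI : NeZero n := ⟨by omega⟩
  set s : ℝ := Real.sqrt 5 with hsdef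
  set F : ℕ → ℝ := fun j => ((2:ℝ) ^ (n - j) / s) * ((-3 + s) ^ j / ((2:ℝ) ^ n - (-3 + s) ^ n) - (-3 - s) ^ j / ((2:ℝ) ^ n - (-3 - s) ^ n)) with hFdef
  set a : Fin n → ℝ := fun j => F j.val with hadef
  -- key identity
  have hs5 : s ^ 2 = 5 := Real.sq_sqrt (by norm_num)
  have hsnn : (0:ℝ) ≤ s := Real.sqrt_nonneg 5
  have hs2 : (2:ℝ) < s := by nlinarith
  have hs3 : s < 3 := by nlinarith
  have hs0 : s ≠ 0 := by linarith
  have hA0 : (2:ℝ) ^ n - (-3 + s) ^ n ≠ 0 := by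
    have habs : |(-3 + s)| < 2 := by rw [abs_lt]; constructor <;> linarith
    have hlt : (-3 + s) ^ n < 2 ^ n := by
      calc (-3 + s) ^ n ≤ |(-3 + s) ^ n| := le_abs_self _
        _ = |(-3 + s)| ^ n := abs_pow _ _
        _ < 2 ^ n := pow_lt_pow_left₀ habs (abs_nonneg _) (by omega)
    exact sub_ne_zero_of_ne hlt.ne'
  have hB0 : (2:ℝ) ^ n - (-3 - s) ^ n ≠ 0 := by
    have habs : (2:ℝ) < |(-3 - s)| := by rw [abs_of_neg (by linarith)]; linarith
    have hlt : (2:ℝ) ^ n < |(-3 - s) ^ n| := by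
      rw [abs_pow]; exact pow_lt_pow_left₀ habs (by norm_num) (by omega)
    intro hc
    have h2 : (2:ℝ) ^ n = (-3 - s) ^ n := by linarith [sub_eq_zero.mp hc]
    rw [← h2, abs_of_pos (pow_pos two_pos n)] at hlt
    linarith
  have hab : (-3 + s) * (-3 - s) = 4 := by linear_combination -hs5
  have hkey : ∀ d : Fin n, 3 * a d + a (d - 1) + a (d + 1) = if d = 0 then 1 else 0 := by
    have hL1 : ∀ i : ℕ, i + 2 ≤ n → F i + 3 * F (i+1) + F (i+2) = 0 := by
      intro i hi
      simp only [hFdef]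
      have e0 : n - i = (n - (i+2)) + 2 := by omega
      have e1 : n - (i+1) = (n - (i+2)) + 1 := by omega
      rw [e0, e1]
      set N := n - (i+2) with hN
      field_simp
      linear_combination (2 ^ N * ((-3 + s) ^ i * ((2:ℝ) ^ n - (-3 - s) ^ n) -
        (-3 - s) ^ i * ((2:ℝ) ^ n - (-3 + s) ^ n))) * hs5
    have hL2 : 3 * F 0 + F 1 + F (n-1) = 1 := by
      obtain ⟨m, hm⟩ : ∃ m, n = m + 1 := ⟨n - 1, by omega⟩
      have hPQ : (-3 + s) ^ m * (-3 - s) ^ m = 2 ^ m * 2 ^ m := by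
        rw [← mul_pow, hab, ← mul_pow]; norm_num
      simp only [hFdef]
      rw [hm]
      simp only [Nat.sub_zero, Nat.add_sub_cancel, pow_zero, pow_one, Nat.sub_self]
      rw [show m + 1 - m = 1 from by omega, pow_one]
      rw [hm] at hA0 hB0
      field_simp
      linear_combination ((2:ℝ) ^ m * (-3 + s) ^ m - 2 ^ m * (-3 - s) ^ m +
        s * ((-3 + s) ^ m * (-3 - s) ^ m)) * hs5
    have hL4 : F n = F 0 := by
      simp only [hFdef]
      rw [Nat.sub_self, Nat.sub_zero, pow_zero]
      field_simp
      ring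
    intro d
    have hd1 : ((1:Fin n) : ℕ) = 1 := by rw [Fin.val_one', Nat.mod_eq_of_lt (by omega)]
    have hadd : (d + 1).val = (d.val + 1) % n := by rw [Fin.add_def, hd1]
    have hsub : (d - 1).val = (n - 1 + d.val) % n := by rw [Fin.sub_def, hd1]
    have hd0iff : (d = 0) ↔ d.val = 0 := by rw [Fin.ext_iff]; simp
    have hdlt := d.isLt
    rcases Nat.eq_zero_or_pos d.val with h0 | hpos
    · -- d = 0
      rw [if_pos (hd0iff.mpr h0)]
      have e1 : (d + 1).val = 1 := by rw [hadd, h0]; rw [Nat.mod_eq_of_lt (by omega)]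
      have e2 : (d - 1).val = n - 1 := by rw [hsub, h0, Nat.add_zero, Nat.mod_eq_of_lt (by omega)]
      show 3 * F d.val + F (d-1).val + F (d+1).val = 1
      rw [h0, e1, e2]; linarith [hL2]
    · rw [if_neg (by intro h; rw [hd0iff] at h; omega)]
      show 3 * F d.val + F (d-1).val + F (d+1).val = 0
      rcases Nat.lt_or_ge d.val (n-1) with hmid | hlast
      · -- 1 ≤ d.val ≤ n - 2
        have e1 : (d + 1).val = d.val + 1 := by rw [hadd, Nat.mod_eq_of_lt (by omega)]
        have e2 : (d - 1).val = d.val - 1 := by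
          rw [hsub]
          have : n - 1 + d.val = (d.val - 1) + n := by omega
          rw [this, Nat.add_mod_right, Nat.mod_eq_of_lt (by omega)]
        rw [e1, e2]
        obtain ⟨i, hi⟩ : ∃ i, d.val = i + 1 := ⟨d.val - 1, by omega⟩
        rw [hi]
        have := hL1 i (by omega)
        simp only [Nat.add_sub_cancel]
        linarith
      · -- d.val = n - 1
        have hdv : d.val = n - 1 := by omega
        have e1 : (d + 1).val = 0 := by
          rw [hadd, hdv]
          have : n - 1 + 1 = n := by omega
          rw [this, Nat.mod_self]
        have e2 : (d - 1).val = n - 2 := by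
          rw [hsub, hdv]
          have : n - 1 + (n - 1) = (n - 2) + n := by omega
          rw [this, Nat.add_mod_right, Nat.mod_eq_of_lt (by omega)]
        rw [e1, e2, hdv]
        have h1 := hL1 (n-2) (by omega)
        have en1 : n - 2 + 1 = n - 1 := by omega
        have en2 : n - 2 + 2 = n := by omega
        rw [en1, en2, hL4] at h1
        linarith
  -- matrix part
  apply Matrix.inv_eq_right_inv
  subst hB
  ext i j
  rw [Matrix.mul_apply, Matrix.one_apply]
  have hd1 : ((1:Fin n) : ℕ) = 1 := by rw [Fin.val_one', Nat.mod_eq_of_lt (by omega)]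
  have hm1 : ((-1:Fin n) : ℕ) = n - 1 := by
    have h : (-1 : Fin n) = 0 - 1 := (zero_sub 1).symm
    rw [h, Fin.sub_def, hd1]
    show (n - 1 + ((0:Fin n)).val) % n = n - 1
    rw [Fin.val_zero, Nat.add_zero, Nat.mod_eq_of_lt (by omega)]
  have hsplit : ∀ k : Fin n,
      (circ (fun k : Fin n => if k.val = 0 then (3:ℝ) else if k.val = 1 ∨ k.val = n - 1 then 1 else 0)) i k
        * (circ a) k j
      = (if k = i then 3 * a (j - i) else 0) + (if k = i + 1 then a (j - i - 1) else 0)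
        + (if k = i - 1 then a (j - i + 1) else 0) := by
    intro k
    show (if (k - i).val = 0 then (3:ℝ) else if (k - i).val = 1 ∨ (k - i).val = n - 1 then 1 else 0) * a (j - k) = _
    have hiff0 : (k - i).val = 0 ↔ k = i := by
      rw [← sub_eq_zero (a := k) (b := i), Fin.ext_iff, Fin.val_zero]
    have hiff1 : (k - i).val = 1 ↔ k = i + 1 := by
      rw [show i + 1 = 1 + i from add_comm i 1, ← sub_eq_iff_eq_add, Fin.ext_iff, hd1]
    have hiffm : (k - i).val = n - 1 ↔ k = i - 1 := by
      rw [show i - 1 = -1 + i from by abel, ← sub_eq_iff_eq_add, Fin.ext_iff, hm1]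
    have hvlt := (k - i).isLt
    by_cases h0 : k = i
    · have hv : (k - i).val = 0 := hiff0.mpr h0
      rw [if_pos hv, if_pos h0, if_neg (fun hc => by have := hiff1.mpr hc; omega),
        if_neg (fun hc => by have := hiffm.mpr hc; omega), h0]
      ring
    · rw [if_neg (fun hc => h0 (hiff0.mp hc)), if_neg h0]
      by_cases h1 : k = i + 1
      · have hv : (k - i).val = 1 := hiff1.mpr h1
        rw [if_pos (Or.inl hv), if_pos h1, if_neg (fun hc => by have := hiffm.mpr hc; omega), h1,
          show j - (i + 1) = j - i - 1 from by abel]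
        ring
      · rw [if_neg h1]
        by_cases hm : k = i - 1
        · have hv : (k - i).val = n - 1 := hiffm.mpr hm
          rw [if_pos (Or.inr hv), if_pos hm, hm, show j - (i - 1) = j - i + 1 from by abel]
          ring
        · rw [if_neg hm, if_neg (fun hc : (k-i).val = 1 ∨ (k-i).val = n - 1 => by
            rcases hc with hc | hc
            · exact h1 (hiff1.mp hc)
            · exact hm (hiffm.mp hc))]
          ring
  rw [Finset.sum_congr rfl (fun k _ => hsplit k), Finset.sum_add_distrib, Finset.sum_add_distrib,
    Finset.sum_ite_eq', Finset.sum_ite_eq', Finset.sum_ite_eq']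
  simp only [Finset.mem_univ, if_true]
  rw [hkey (j - i)]
  by_cases hij : i = j
  · rw [if_pos hij, if_pos (by rw [hij, sub_self])]
  · rw [if_neg hij, if_neg (fun hc => hij (sub_eq_zero.mp hc).symm)]
end
end

section
/- Let n ≥ 5 and let C be the (n−1)×(n−1) circulant matrix circ(1,0,…,0,1). Then X = 2(CCᵀ + I_{n−1})⁻¹((n−1)I_{n−1} − J_{n−1}) equals the circulant matrix circ(b_0, b_1, …, b_{n−2}) where, for 0 ≤ j ≤ n−2, b_j = −2/5 + (2^{n−j}(n−1)/√5) · [ (−3+√5)^j / (2^{n−1} − (−3+√5)^{n−1}) − (−3−√5)^j / (2^{n−1} − (−3−√5)^{n−1}) ]. -/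
open Matrix

noncomputable section

lemma circ_transpose {m : ℕ} [NeZero m] (v : Fin m → ℝ) : (circ v)ᵀ = circ (fun k => v (-k)) := by
  ext i j; simp only [circ, Matrix.transpose_apply, Matrix.of_apply, neg_sub]

lemma circ_mul {m : ℕ} [NeZero m] (u w : Fin m → ℝ) :
    circ u * circ w = circ (fun d => ∑ k, u k * w (d - k)) := by
  ext i j
  simp only [circ, Matrix.mul_apply, Matrix.of_apply]
  refine Fintype.sum_equiv (Equiv.subRight i) _ _ fun k => ?_
  simp only [Equiv.subRight_apply]
  rw [sub_sub_sub_cancel_right]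

lemma one_eq_circ {m : ℕ} [NeZero m] :
    (1 : Matrix (Fin m) (Fin m) ℝ) = circ (fun k => if k = 0 then 1 else 0) := by
  ext i j
  simp only [circ, Matrix.one_apply, Matrix.of_apply, sub_eq_zero]
  rcases eq_or_ne i j with h | h
  · simp [h]
  · simp [h, (Ne.symm h)]

lemma circ_smul {m : ℕ} (c : ℝ) (u : Fin m → ℝ) : c • circ u = circ (c • u) := by
  ext i j; simp [circ]

lemma circ_add {m : ℕ} (u w : Fin m → ℝ) : circ u + circ w = circ (u + w) := by
  ext i j; simp [circ]

/-- the vector of the claimed inverse-product matrix -/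
def B (m j : ℕ) : ℝ :=
  -2/5 + ((2:ℝ) ^ (m + 5 - j) * ((↑(m+5):ℝ) - 1) / Real.sqrt 5) *
    ((-3 + Real.sqrt 5) ^ j / ((2:ℝ) ^ (m+5-1) - (-3 + Real.sqrt 5) ^ (m+5-1)) -
     (-3 - Real.sqrt 5) ^ j / ((2:ℝ) ^ (m+5-1) - (-3 - Real.sqrt 5) ^ (m+5-1)))

lemma keyI (s al be Da Db K : ℝ) (ha : al^2 + 6*al + 4 = 0) (hb : be^2 + 6*be + 4 = 0) (e t : ℕ) :
    3*(-2/5 + ((2:ℝ)^(e+1)*K/s)*(al^(t+1)/Da - be^(t+1)/Db))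
    + (-2/5 + ((2:ℝ)^(e+2)*K/s)*(al^t/Da - be^t/Db))
    + (-2/5 + ((2:ℝ)^e*K/s)*(al^(t+2)/Da - be^(t+2)/Db)) = -2 := by
  linear_combination ((2:ℝ)^e * al^t * K/(s*Da)) * ha - ((2:ℝ)^e * be^t * K/(s*Db)) * hb

lemma key0 (s P Q R K : ℝ) (hs : s^2 = 5) (hs0 : s ≠ 0)
    (hD1 : 4*P - (-3+s)^2*Q ≠ 0) (hD2 : 4*P - (-3-s)^2*R ≠ 0) :
    3*(-2/5 + (8*P*K/s)*(1/(4*P - (-3+s)^2*Q) - 1/(4*P - (-3-s)^2*R)))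
    + (-2/5 + (4*K/s)*(((-3+s)*Q)/(4*P - (-3+s)^2*Q) - ((-3-s)*R)/(4*P - (-3-s)^2*R)))
    + (-2/5 + (4*P*K/s)*((-3+s)/(4*P - (-3+s)^2*Q) - (-3-s)/(4*P - (-3-s)^2*R)))
    = 2*K - 2 := by
  obtain ⟨D1, hd1⟩ : ∃ D1, D1 = 4*P - (-3+s)^2*Q := ⟨_, rfl⟩
  obtain ⟨D2, hd2⟩ : ∃ D2, D2 = 4*P - (-3-s)^2*R := ⟨_, rfl⟩
  rw [← hd1, ← hd2]
  rw [← hd1] at hD1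
  rw [← hd2] at hD2
  field_simp
  subst hd1 hd2
  linear_combination (K*((20*s-60)*P*Q + (20*s+60)*P*R + (-10*s^3+90*s)*Q*R)) * hs

lemma keyL (s P Q R K : ℝ) (hs : s^2 = 5) (hs0 : s ≠ 0)
    (hD1 : 4*P - (-3+s)^2*Q ≠ 0) (hD2 : 4*P - (-3-s)^2*R ≠ 0) :
    3*(-2/5 + (4*K/s)*(((-3+s)*Q)/(4*P - (-3+s)^2*Q) - ((-3-s)*R)/(4*P - (-3-s)^2*R)))
    + (-2/5 + (8*K/s)*(Q/(4*P - (-3+s)^2*Q) - R/(4*P - (-3-s)^2*R)))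
    + (-2/5 + (8*P*K/s)*(1/(4*P - (-3+s)^2*Q) - 1/(4*P - (-3-s)^2*R)))
    = -2 := by
  field_simp
  linear_combination (K*(40*P*Q - 40*P*R - 120*s*Q*R)) * hs

lemma sqrt5_sq : Real.sqrt 5 ^ 2 = 5 := Real.sq_sqrt (by norm_num)

lemma sqrt5_gt_two : 2 < Real.sqrt 5 := by
  nlinarith [sqrt5_sq, Real.sqrt_nonneg 5]

lemma sqrt5_lt_three : Real.sqrt 5 < 3 := by
  nlinarith [sqrt5_sq, Real.sqrt_nonneg 5]

lemma Dal_ne (k : ℕ) (hk : k ≠ 0) : (2:ℝ) ^ k - (-3 + Real.sqrt 5) ^ k ≠ 0 := by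
  have h1 : |(-3 + Real.sqrt 5)| < 2 := by
    rw [abs_lt]
    constructor <;> nlinarith [sqrt5_gt_two, sqrt5_lt_three]
  intro h
  have h2 : (-3 + Real.sqrt 5) ^ k = 2 ^ k := by linarith
  have h3 : |(-3 + Real.sqrt 5) ^ k| ≤ |(-3 + Real.sqrt 5)| ^ k := by rw [abs_pow]
  have h4 : |(-3 + Real.sqrt 5)| ^ k < 2 ^ k :=
    pow_lt_pow_left₀ h1 (abs_nonneg _) hk
  rw [h2, abs_of_nonneg (by positivity : (0:ℝ) ≤ (2:ℝ)^k)] at h3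
  linarith

lemma Dbe_ne (k : ℕ) (hk : k ≠ 0) : (2:ℝ) ^ k - (-3 - Real.sqrt 5) ^ k ≠ 0 := by
  have h1 : (2:ℝ) < |(-3 - Real.sqrt 5)| := by
    rw [abs_of_neg (by nlinarith [sqrt5_gt_two] : (-3 - Real.sqrt 5) < 0)]
    nlinarith [sqrt5_gt_two]
  intro h
  have h2 : (-3 - Real.sqrt 5) ^ k = 2 ^ k := by linarith
  have h3 : (2:ℝ) ^ k < |(-3 - Real.sqrt 5)| ^ k :=
    pow_lt_pow_left₀ h1 (by norm_num) hk
  rw [← abs_pow, h2, abs_of_nonneg (by positivity : (0:ℝ) ≤ (2:ℝ)^k)] at h3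
  linarith

lemma bridge_hD1 (m : ℕ) :
    4*(2:ℝ)^(m+2) - (-3+Real.sqrt 5)^2*(-3+Real.sqrt 5)^(m+2) ≠ 0 := by
  have h := Dal_ne (m+4) (by omega)
  rwa [show (2:ℝ)^(m+4) = 4*2^(m+2) by ring,
       show (-3+Real.sqrt 5)^(m+4) = (-3+Real.sqrt 5)^2*(-3+Real.sqrt 5)^(m+2) by ring] at h

lemma bridge_hD2 (m : ℕ) :
    4*(2:ℝ)^(m+2) - (-3-Real.sqrt 5)^2*(-3-Real.sqrt 5)^(m+2) ≠ 0 := by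
  have h := Dbe_ne (m+4) (by omega)
  rwa [show (2:ℝ)^(m+4) = 4*2^(m+2) by ring,
       show (-3-Real.sqrt 5)^(m+4) = (-3-Real.sqrt 5)^2*(-3-Real.sqrt 5)^(m+2) by ring] at h

lemma al_root : (-3+Real.sqrt 5)^2 + 6*(-3+Real.sqrt 5) + 4 = 0 := by
  linear_combination sqrt5_sq

lemma be_root : (-3-Real.sqrt 5)^2 + 6*(-3-Real.sqrt 5) + 4 = 0 := by
  linear_combination sqrt5_sq

lemma sqrt5_ne : Real.sqrt 5 ≠ 0 := by positivity

lemma bridgeI (m j : ℕ) (h1 : 1 ≤ j) (h2 : j ≤ m+2) :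
    3 * B m j + B m (j-1) + B m (j+1) = -2 := by
  obtain ⟨t, rfl⟩ : ∃ t, j = t + 1 := ⟨j-1, by omega⟩
  obtain ⟨e, he⟩ : ∃ e, m + 3 = t + e := ⟨m+3-t, by omega⟩
  simp only [B, show t+1-1 = t from rfl]
  rw [show m+5-(t+1+1) = e by omega, show m+5-(t+1) = e+1 by omega,
      show m+5-t = e+2 by omega]
  linear_combination keyI (Real.sqrt 5) (-3+Real.sqrt 5) (-3-Real.sqrt 5)
    ((2:ℝ)^(m+5-1) - (-3+Real.sqrt 5)^(m+5-1)) ((2:ℝ)^(m+5-1) - (-3-Real.sqrt 5)^(m+5-1))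
    ((↑(m+5):ℝ)-1) al_root be_root e t

lemma bridge0 (m : ℕ) :
    3 * B m 0 + B m (m+3) + B m 1 = 2*((↑(m+5):ℝ)-1) - 2 := by
  simp only [B]
  rw [show m+5-(m+3) = 2 by omega, show m+5-1 = m+4 from rfl, show m+5-0 = m+5 by omega]
  linear_combination key0 (Real.sqrt 5) ((2:ℝ)^(m+2)) ((-3+Real.sqrt 5)^(m+2))
    ((-3-Real.sqrt 5)^(m+2)) ((↑(m+5):ℝ)-1) sqrt5_sq sqrt5_ne (bridge_hD1 m) (bridge_hD2 m)

lemma bridgeL (m : ℕ) :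
    3 * B m (m+3) + B m (m+2) + B m 0 = -2 := by
  simp only [B]
  rw [show m+5-(m+3) = 2 by omega, show m+5-(m+2) = 3 by omega,
      show m+5-1 = m+4 from rfl, show m+5-0 = m+5 by omega]
  linear_combination keyL (Real.sqrt 5) ((2:ℝ)^(m+2)) ((-3+Real.sqrt 5)^(m+2))
    ((-3-Real.sqrt 5)^(m+2)) ((↑(m+5):ℝ)-1) sqrt5_sq sqrt5_ne (bridge_hD1 m) (bridge_hD2 m)

theorem wheel_X_entries (n : ℕ) (hn : 5 ≤ n)
    (C X : Matrix (Fin (n-1)) (Fin (n-1)) ℝ)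
    (hC : C = circ (fun k => if k.val = 0 ∨ k.val = n - 2 then (1:ℝ) else 0))
    (hX : X = (2:ℝ) • ((C * Cᵀ + 1)⁻¹ * (((n:ℝ) - 1) • (1 : Matrix (Fin (n-1)) (Fin (n-1)) ℝ) - Jmat (n-1)))) :
    X = circ (fun j : Fin (n-1) => -2/5 + ((2:ℝ) ^ (n - j.val) * ((n:ℝ) - 1) / Real.sqrt 5) * ((-3 + Real.sqrt 5) ^ j.val / ((2:ℝ) ^ (n-1) - (-3 + Real.sqrt 5) ^ (n-1)) - (-3 - Real.sqrt 5) ^ j.val / ((2:ℝ) ^ (n-1) - (-3 - Real.sqrt 5) ^ (n-1)))) := by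
  obtain ⟨m, rfl⟩ : ∃ m, n = m + 5 := ⟨n - 5, by omega⟩
  haveI : NeZero (m + 5 - 1) := ⟨by omega⟩
  subst hC hX
  -- basic Fin facts
  have hval1 : ((1 : Fin (m+5-1))).val = 1 := by
    rw [Fin.val_one', Nat.mod_eq_of_lt (by omega)]
  have hvalneg1 : ((-1 : Fin (m+5-1))).val = m + 3 := by
    have : ((-1 : Fin (m+5-1))).val = (m+5-1 - ((1 : Fin (m+5-1))).val) % (m+5-1) := rfl
    rw [this, hval1, Nat.mod_eq_of_lt (by omega)]; omega
  have h0ne1 : (0 : Fin (m+5-1)) ≠ 1 := by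
    simp only [ne_eq, Fin.ext_iff, Fin.val_zero, hval1]; omega
  have h0nen : (0 : Fin (m+5-1)) ≠ -1 := by
    simp only [ne_eq, Fin.ext_iff, Fin.val_zero, hvalneg1]; omega
  have h1nen : (1 : Fin (m+5-1)) ≠ -1 := by
    simp only [ne_eq, Fin.ext_iff, hval1, hvalneg1]; omega
  -- the defining vector of C as sum of indicators
  have hv : (fun k : Fin (m+5-1) => if k.val = 0 ∨ k.val = m + 5 - 2 then (1:ℝ) else 0)
      = fun k => (if k = 0 then (1:ℝ) else 0) + (if k = -1 then 1 else 0) := by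
    funext k
    have hk0 : (k = 0) ↔ k.val = 0 := by rw [Fin.ext_iff]; simp
    have hkn : (k = -1) ↔ k.val = m + 5 - 2 := by rw [Fin.ext_iff, hvalneg1]; omega
    by_cases ha : k.val = 0 <;> by_cases hb : k.val = m + 5 - 2 <;>
      simp [hk0, hkn, ha, hb] <;> omega
  rw [hv]
  set vsum : Fin (m+5-1) → ℝ := fun k => (if k = 0 then (1:ℝ) else 0) + (if k = -1 then 1 else 0)
    with hvsum
  -- step 1 : C * Cᵀ + 1 as circulant
  have step1 : circ vsum * (circ vsum)ᵀ + 1 =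
      circ (fun d => (if d = 0 then (3:ℝ) else 0) + (if d = 1 then 1 else 0) + (if d = -1 then 1 else 0)) := by
    rw [circ_transpose, circ_mul, one_eq_circ, circ_add]
    refine congrArg circ (funext fun d => ?_)
    show (∑ k, vsum k * vsum (-(d - k))) + (if d = 0 then (1:ℝ) else 0) = _
    have hsum : (∑ k, vsum k * vsum (-(d - k)))
        = vsum (-(d - 0)) + vsum (-(d - (-1))) := by
      simp only [hvsum, add_mul, ite_mul, one_mul, zero_mul, Finset.sum_add_distrib,
        Finset.sum_ite_eq', Finset.mem_univ, if_true]
    rw [hsum]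
    simp only [hvsum, sub_zero, sub_neg_eq_add, neg_eq_zero, neg_inj,
      add_eq_zero_iff_eq_neg, add_eq_right]
    by_cases hd0 : d = 0 <;> by_cases hd1 : d = 1 <;> by_cases hdn : d = -1 <;>
      simp_all <;> norm_num
  have hfold : (fun j : Fin (m+5-1) => -2/5 + ((2:ℝ) ^ (m + 5 - j.val) * ((↑(m+5):ℝ) - 1) / Real.sqrt 5) * ((-3 + Real.sqrt 5) ^ j.val / ((2:ℝ) ^ (m+5-1) - (-3 + Real.sqrt 5) ^ (m+5-1)) - (-3 - Real.sqrt 5) ^ j.val / ((2:ℝ) ^ (m+5-1) - (-3 - Real.sqrt 5) ^ (m+5-1)))) = fun j => B m j.val := rfl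
  rw [hfold]
  set Bv : Fin (m+5-1) → ℝ := fun j => B m j.val with hBv
  set A := circ vsum * (circ vsum)ᵀ + 1 with hA
  have hsym : (circ vsum)ᵀ = (circ vsum)ᴴ := by
    ext i j; simp [Matrix.conjTranspose_apply, Matrix.transpose_apply]
  have hpd : A.PosDef := by
    rw [hA, hsym]
    exact Matrix.PosDef.posSemidef_add (Matrix.posSemidef_self_mul_conjTranspose _) Matrix.PosDef.one
  have hu : IsUnit A.det := hpd.det_pos.ne'.isUnit
  have step2 : A * circ Bv = circ (fun d => 3 * Bv d + Bv (d - 1) + Bv (d + 1)) := by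
    rw [step1, circ_mul]
    refine congrArg circ (funext fun d => ?_)
    simp only [add_mul, ite_mul, one_mul, zero_mul, Finset.sum_add_distrib,
      Finset.sum_ite_eq', Finset.mem_univ, if_true, sub_zero, sub_neg_eq_add]
  have step3 : ((↑(m+5):ℝ) - 1) • (1 : Matrix (Fin (m+5-1)) (Fin (m+5-1)) ℝ) - Jmat (m+5-1)
      = circ (fun d => ((↑(m+5):ℝ) - 1) * (if d = 0 then 1 else 0) - 1) := by
    ext i j
    rcases eq_or_ne i j with h | h
    · subst h; simp [circ, Jmat, Matrix.one_apply]
    · have hne : j - i ≠ 0 := sub_ne_zero.mpr (Ne.symm h)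
      simp [circ, Jmat, Matrix.one_apply, h, hne]
  have hkey : A * circ Bv = (2:ℝ) • (((↑(m+5):ℝ) - 1) • (1 : Matrix (Fin (m+5-1)) (Fin (m+5-1)) ℝ) - Jmat (m+5-1)) := by
    rw [step2, step3, circ_smul]
    refine congrArg circ (funext fun d => ?_)
    simp only [Pi.smul_apply, smul_eq_mul, hBv]
    by_cases hd0 : d = 0
    · subst hd0
      rw [show ((0:Fin (m+5-1)) - 1) = -1 from zero_sub 1,
          show ((0:Fin (m+5-1)) + 1) = 1 from zero_add 1,
          Fin.val_zero, hvalneg1, hval1, if_pos rfl]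
      linear_combination bridge0 m
    · by_cases hdl : d.val = m + 3
      · have hd : d = -1 := Fin.val_injective (by rw [hvalneg1]; exact hdl)
        subst hd
        rw [show ((-1:Fin (m+5-1)) + 1) = 0 from neg_add_cancel 1]
        have hsubval : ((-1:Fin (m+5-1)) - 1).val = m + 2 := by
          have : ((-1:Fin (m+5-1)) - 1).val
              = ((m+5-1 - ((1:Fin (m+5-1))).val) + ((-1:Fin (m+5-1))).val) % (m+5-1) := rfl
          rw [this, hval1, hvalneg1, show m+5-1-1 + (m+3) = (m+5-1) + (m+2) by omega,
            Nat.add_mod_left, Nat.mod_eq_of_lt (by omega)]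
        rw [hsubval, hvalneg1, Fin.val_zero, if_neg (Ne.symm h0nen)]
        linear_combination bridgeL m
      · have h1 : 1 ≤ d.val := by
          rcases Nat.eq_zero_or_pos d.val with h | h
          · exact absurd (Fin.val_injective (by simpa using h)) hd0
          · exact h
        have h2 : d.val ≤ m + 2 := by have := d.isLt; omega
        have hadd : (d + 1).val = d.val + 1 := by
          have : (d + 1).val = (d.val + ((1:Fin (m+5-1))).val) % (m+5-1) := rfl
          rw [this, hval1, Nat.mod_eq_of_lt (by omega)]
        have hsub : (d - 1).val = d.val - 1 := by
          have : (d - 1).val = ((m+5-1 - ((1:Fin (m+5-1))).val) + d.val) % (m+5-1) := rfl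
          rw [this, hval1, show m+5-1-1 + d.val = (m+5-1) + (d.val - 1) by omega,
            Nat.add_mod_left, Nat.mod_eq_of_lt (by omega)]
        rw [hadd, hsub, if_neg hd0]
        linear_combination bridgeI m d.val h1 h2
  calc (2:ℝ) • (A⁻¹ * (((↑(m+5):ℝ) - 1) • (1 : Matrix (Fin (m+5-1)) (Fin (m+5-1)) ℝ) - Jmat (m+5-1)))
      = A⁻¹ * ((2:ℝ) • (((↑(m+5):ℝ) - 1) • (1 : Matrix (Fin (m+5-1)) (Fin (m+5-1)) ℝ) - Jmat (m+5-1))) := (Matrix.mul_smul _ _ _).symm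
    _ = A⁻¹ * (A * circ Bv) := by rw [hkey]
    _ = circ Bv := by rw [← Matrix.mul_assoc, Matrix.nonsing_inv_mul A hu, Matrix.one_mul]
end
end

section
/- Let n ≥ 4, let C be the (n−1)×(n−1) circulant matrix circ(1,0,…,0,1), X = 2(CCᵀ + I_{n−1})⁻¹((n−1)I_{n−1} − J_{n−1}), and Y = J_{n−1} + CᵀX. Then X² + YᵀY = (n−1)(J_{n−1} + 2X). -/
open Matrix

noncomputable section

lemma sum_ind {m : ℕ} (a b : Fin m) (hab : a ≠ b) :
    ∑ j : Fin m, (if j = a ∨ j = b then (1:ℝ) else 0) = 2 := by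
  have h : ∀ j : Fin m, (if j = a ∨ j = b then (1:ℝ) else 0)
      = (if j = a then (1:ℝ) else 0) + (if j = b then (1:ℝ) else 0) := by
    intro j
    by_cases h1 : j = a <;> by_cases h2 : j = b <;>
      simp_all
  simp only [h, Finset.sum_add_distrib, Finset.sum_ite_eq', Finset.mem_univ, if_true]
  norm_num

theorem wheel_X_sq_add_YtY (n : ℕ) (hn : 4 ≤ n)
    (C X Y : Matrix (Fin (n-1)) (Fin (n-1)) ℝ)
    (hC : C = circ (fun k => if k.val = 0 ∨ k.val = n - 2 then (1:ℝ) else 0))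
    (hX : X = (2:ℝ) • ((C * Cᵀ + 1)⁻¹ * (((n:ℝ) - 1) • (1 : Matrix (Fin (n-1)) (Fin (n-1)) ℝ) - Jmat (n-1))))
    (hY : Y = Jmat (n-1) + Cᵀ * X) :
    X * X + Yᵀ * Y = ((n:ℝ) - 1) • (Jmat (n-1) + (2:ℝ) • X) := by
  haveI : NeZero (n-1) := ⟨by omega⟩
  set J : Matrix (Fin (n-1)) (Fin (n-1)) ℝ := Jmat (n-1) with hJdef
  set a : Fin (n-1) := ⟨0, by omega⟩ with hadef
  set b : Fin (n-1) := ⟨n-2, by omega⟩ with hbdef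
  have hab : a ≠ b := by
    simp only [hadef, hbdef, ne_eq, Fin.mk.injEq]
    omega
  have hcond : ∀ j : Fin (n-1),
      (if j.val = 0 ∨ j.val = n-2 then (1:ℝ) else 0) = (if j = a ∨ j = b then (1:ℝ) else 0) := by
    intro j
    congr 1
    exact propext (or_congr (Fin.ext_iff : j = a ↔ _).symm (Fin.ext_iff : j = b ↔ _).symm)
  -- basic J facts
  have hJJ : J * J = ((n:ℝ)-1) • J := by
    ext i j
    simp only [hJdef, Matrix.mul_apply, Jmat, Matrix.smul_apply, Matrix.of_apply,
      smul_eq_mul, mul_one]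
    rw [Finset.sum_const, Finset.card_univ, Fintype.card_fin]
    have : ((n-1 : ℕ) : ℝ) = (n:ℝ) - 1 := by
      rw [Nat.cast_sub (by omega)]; norm_num
    simp [this]
  have hJt : Jᵀ = J := by ext i j; simp [hJdef, Jmat, Matrix.transpose_apply]
  have hCJ : C * J = (2:ℝ) • J := by
    subst hC
    ext i j
    simp only [Matrix.mul_apply, circ, Jmat, hJdef, Matrix.smul_apply, Matrix.of_apply,
      smul_eq_mul, mul_one]
    simp only [hcond]
    rw [← sum_ind a b hab]
    exact Fintype.sum_equiv (Equiv.subRight i) _ _ (fun k => rfl)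
  have hJC : J * C = (2:ℝ) • J := by
    subst hC
    ext i j
    simp only [Matrix.mul_apply, circ, Jmat, hJdef, Matrix.smul_apply, Matrix.of_apply,
      smul_eq_mul, one_mul, mul_one]
    simp only [hcond]
    rw [← sum_ind a b hab]
    exact Fintype.sum_equiv (Equiv.subLeft j) _ _ (fun k => rfl)
  have hCtJ : Cᵀ * J = (2:ℝ) • J := by
    have := congrArg Matrix.transpose hJC
    rwa [Matrix.transpose_mul, hJt, Matrix.transpose_smul, hJt] at this
  have hJCt : J * Cᵀ = (2:ℝ) • J := by
    have := congrArg Matrix.transpose hCJ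
    rwa [Matrix.transpose_mul, hJt, Matrix.transpose_smul, hJt] at this
  -- A facts
  set A : Matrix (Fin (n-1)) (Fin (n-1)) ℝ := C * Cᵀ + 1 with hAdef
  have hApd : A.PosDef := by
    apply Matrix.PosDef.posSemidef_add _ Matrix.PosDef.one
    have := Matrix.posSemidef_self_mul_conjTranspose C
    rwa [Matrix.conjTranspose_eq_transpose_of_trivial] at this
  have hAunit : IsUnit A.det := (Matrix.isUnit_iff_isUnit_det A).mp hApd.isUnit
  have hAinv1 : A⁻¹ * A = 1 := Matrix.nonsing_inv_mul A hAunit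
  have hAinv2 : A * A⁻¹ = 1 := Matrix.mul_nonsing_inv A hAunit
  have hAt : Aᵀ = A := by
    have h := hApd.isHermitian
    rwa [Matrix.IsHermitian, Matrix.conjTranspose_eq_transpose_of_trivial] at h
  have hAJ : A * J = (5:ℝ) • J := by
    rw [hAdef, add_mul, one_mul, mul_assoc, hCtJ, Matrix.mul_smul, hCJ, smul_smul]
    module
  have hJA : J * A = (5:ℝ) • J := by
    rw [hAdef, mul_add, mul_one, ← mul_assoc, hJC, Matrix.smul_mul, hJCt, smul_smul]
    module
  -- B facts
  set B : Matrix (Fin (n-1)) (Fin (n-1)) ℝ :=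
    ((n:ℝ) - 1) • (1 : Matrix (Fin (n-1)) (Fin (n-1)) ℝ) - J with hBdef
  have hBJ : B * J = 0 := by
    rw [hBdef, sub_mul, Matrix.smul_mul, one_mul, hJJ, sub_self]
  have hJB : J * B = 0 := by
    rw [hBdef, mul_sub, Matrix.mul_smul, mul_one, hJJ, sub_self]
  have hBt : Bᵀ = B := by
    rw [hBdef, Matrix.transpose_sub, Matrix.transpose_smul, Matrix.transpose_one, hJt]
  have hAB : A * B = B * A := by
    rw [hBdef, mul_sub, sub_mul, Matrix.mul_smul, Matrix.smul_mul, mul_one, one_mul,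
      hAJ, hJA]
  -- X facts
  have hXAB : X = (2:ℝ) • (A⁻¹ * B) := hX
  have hBAinv : B * A⁻¹ = A⁻¹ * B := by
    calc B * A⁻¹ = A⁻¹ * (A * B) * A⁻¹ := by
          rw [← mul_assoc A⁻¹ A B, hAinv1, one_mul]
      _ = A⁻¹ * (B * A) * A⁻¹ := by rw [hAB]
      _ = A⁻¹ * B := by rw [mul_assoc, mul_assoc, hAinv2, mul_one]
  have hAX : A * X = (2:ℝ) • B := by
    rw [hXAB, Matrix.mul_smul, ← mul_assoc, hAinv2, one_mul]
  have hXA : X * A = (2:ℝ) • B := by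
    rw [hXAB, Matrix.smul_mul, mul_assoc, ← hAB, ← mul_assoc, hAinv1, one_mul]
  have hXJ : X * J = 0 := by
    rw [hXAB, Matrix.smul_mul, mul_assoc, hBJ, mul_zero, smul_zero]
  have hXt : Xᵀ = X := by
    rw [hXAB, Matrix.transpose_smul, Matrix.transpose_mul, hBt,
      Matrix.transpose_nonsing_inv, hAt, hBAinv]
  have hJX : J * X = 0 := by
    have h := congrArg Matrix.transpose hXJ
    rwa [Matrix.transpose_mul, hXt, hJt, Matrix.transpose_zero] at h
  have hXB : X * B = ((n:ℝ)-1) • X := by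
    rw [hBdef, mul_sub, Matrix.mul_smul, mul_one, hXJ, sub_zero]
  -- main computation
  have hYtY : Yᵀ * Y = ((n:ℝ)-1) • J + X * (A * X) - X * X := by
    rw [hY, Matrix.transpose_add, Matrix.transpose_mul, hXt, hJt, Matrix.transpose_transpose]
    rw [add_mul, mul_add, mul_add, hJJ, ← mul_assoc, hJCt, Matrix.smul_mul, hJX,
      smul_zero]
    have hXCJ : X * C * J = 0 := by rw [mul_assoc, hCJ, Matrix.mul_smul, hXJ, smul_zero]
    have h2 : X * C * (Cᵀ * X) = X * (A * X) - X * X := by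
      rw [hAdef, add_mul, one_mul, mul_add, mul_assoc, ← mul_assoc C, add_sub_cancel_right]
    rw [hXCJ, h2]
    abel
  rw [hYtY, hAX]
  have : X * ((2:ℝ) • B) = (2 * ((n:ℝ)-1)) • X := by
    rw [Matrix.mul_smul, hXB, smul_smul]
  rw [this]
  rw [smul_add, smul_smul]
  have : ((n:ℝ)-1) * 2 = 2 * ((n:ℝ)-1) := by ring
  rw [this]
  abel
end
end

section
/- Let n ≥ 4 and let C be the (n−1)×(n−1) circulant matrix circ(1,0,…,0,−1) (first entry 1, last entry −1, all other entries 0 in its defining vector). Let N be the n×2(n−1) block matrix N = [[𝟏ᵀ, 0ᵀ],[−I_{n−1}, C]] (an oriented incidence matrix of the wheel graph W_n), let X = (CCᵀ + I_{n−1})⁻¹(J_{n−1} − n·I_{n−1}), Y = −CᵀX, and H = (1/n) · [[𝟏, X],[0, Y]]. Then H is the Moore–Penrose inverse of N, i.e. N H N = N, H N H = H, (N H)ᵀ = N H, and (H N)ᵀ = H N. -/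
open Matrix

noncomputable section

def vv (m : ℕ) : Fin m → ℝ := fun k => if k.val = 0 then 1 else if k.val = m - 1 then -1 else 0

section aux
variable {m : ℕ} [NeZero m] (hm : 3 ≤ m)

lemma val_neg_one' : ((-1 : Fin m)).val = m - 1 := by
  cases m with
  | zero => exact absurd rfl (NeZero.ne 0)
  | succ m' => exact Fin.coe_neg_one

lemma val_sub_one' (a : Fin m) (h : a ≠ 0) : ((a - 1 : Fin m)).val = a.val - 1 := by
  cases m with
  | zero => exact a.elim0
  | succ m' => rw [Fin.coe_sub_one, if_neg h]

lemma eq_zero_iff' (k : Fin m) : k = 0 ↔ k.val = 0 := by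
  rw [Fin.ext_iff, Fin.val_zero]

include hm

lemma val_one'' : (1 : Fin m).val = 1 := by
  rw [Fin.val_one']; exact Nat.mod_eq_of_lt (by omega)

lemma eq_neg_one_iff (k : Fin m) : k = -1 ↔ k.val = m - 1 := by
  rw [Fin.ext_iff, val_neg_one']

lemma eq_one_iff' (k : Fin m) : k = 1 ↔ k.val = 1 := by
  rw [Fin.ext_iff, val_one'' hm]

lemma vv_eq (k : Fin m) :
    vv m k = (if k = 0 then 1 else 0) - (if k = -1 then 1 else 0) := by
  unfold vv
  rcases eq_or_ne k.val 0 with h0 | h0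
  · rw [if_pos h0, if_pos ((eq_zero_iff' k).mpr h0),
      if_neg (by rw [eq_neg_one_iff hm]; omega)]
    norm_num
  · rw [if_neg h0, if_neg (fun h => h0 ((eq_zero_iff' k).mp h))]
    rcases eq_or_ne k.val (m - 1) with h1 | h1
    · rw [if_pos h1, if_pos ((eq_neg_one_iff hm k).mpr h1)]; norm_num
    · rw [if_neg h1, if_neg (fun h => h1 ((eq_neg_one_iff hm k).mp h))]; norm_num

lemma vv_zero : vv m (0 : Fin m) = 1 := by
  unfold vv; rw [if_pos (Fin.val_zero m)]

lemma neg_one_ne_zero' : (-1 : Fin m) ≠ 0 := by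
  simp only [ne_eq, eq_zero_iff', val_neg_one']; omega

lemma one_ne_zero'' : (1 : Fin m) ≠ 0 := by
  simp only [ne_eq, eq_zero_iff', val_one'' hm]; omega

lemma one_ne_neg_one' : (1 : Fin m) ≠ -1 := by
  simp only [ne_eq, eq_neg_one_iff hm, val_one'' hm]; omega

lemma vv_neg_one : vv m (-1 : Fin m) = -1 := by
  unfold vv
  rw [if_neg (by rw [val_neg_one']; omega), if_pos (val_neg_one')]

lemma vv_one : vv m (1 : Fin m) = 0 := by
  unfold vv
  rw [if_neg (by rw [val_one'' hm]; omega), if_neg (by rw [val_one'' hm]; omega)]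

lemma sum_vv : ∑ k, vv m k = 0 := by
  rw [Finset.sum_congr rfl (fun k _ => vv_eq hm k), Finset.sum_sub_distrib]
  rw [Finset.sum_ite_eq' Finset.univ (0 : Fin m) (fun _ => (1:ℝ)),
      Finset.sum_ite_eq' Finset.univ (-1 : Fin m) (fun _ => (1:ℝ))]
  simp

lemma circ_row_sum (i : Fin m) : ∑ j, circ (vv m) i j = 0 := by
  have : ∑ j, circ (vv m) i j = ∑ k, vv m k :=
    Fintype.sum_equiv (Equiv.subRight i) _ _ (fun x => rfl)
  rw [this, sum_vv hm]

lemma circ_col_sum (j : Fin m) : ∑ i, circ (vv m) i j = 0 := by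
  have : ∑ i, circ (vv m) i j = ∑ k, vv m k :=
    Fintype.sum_equiv (Equiv.subLeft j) _ _ (fun x => by simp [circ, Equiv.subLeft])
  rw [this, sum_vv hm]



lemma circ_mulT_apply (i j : Fin m) :
    (circ (vv m) * (circ (vv m))ᵀ) i j = vv m (i - j) - vv m (i - j - 1) := by
  rw [mul_apply]
  have h : ∀ k : Fin m, circ (vv m) i k * (circ (vv m))ᵀ k j
      = (if k = i then vv m (k - j) else 0) - (if k = i - 1 then vv m (k - j) else 0) := by
    intro k
    have h1 : circ (vv m) i k = (if k = i then 1 else 0) - (if k = i - 1 then 1 else 0) := by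
      show vv m (k - i) = _
      rw [vv_eq hm (k - i)]
      congr 1
      · exact if_congr sub_eq_zero rfl rfl
      · exact if_congr (sub_eq_iff_eq_add.trans (by rw [neg_add_eq_sub])) rfl rfl
    have h2 : (circ (vv m))ᵀ k j = vv m (k - j) := rfl
    rw [h1, h2, sub_mul, ite_mul, ite_mul, one_mul, zero_mul]
  rw [Finset.sum_congr rfl (fun k _ => h k), Finset.sum_sub_distrib,
    Finset.sum_ite_eq' Finset.univ i (fun k => vv m (k - j)),
    Finset.sum_ite_eq' Finset.univ (i - 1) (fun k => vv m (k - j))]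
  simp only [Finset.mem_univ, if_pos]
  rw [sub_right_comm]

lemma diag_F : vv m (0:Fin m) - vv m ((0:Fin m) - 1) + 1 = 3 := by
  rw [zero_sub, vv_zero hm, vv_neg_one hm]; norm_num

lemma offdiag_F (d : Fin m) (hd : d ≠ 0) :
    |vv m d - vv m (d - 1) + (if d = 0 then 1 else 0)|
      = (if d = 1 then 1 else 0) + (if d = -1 then 1 else 0) := by
  rw [if_neg hd, add_zero]
  rcases eq_or_ne d 1 with rfl | h1
  · rw [if_pos rfl, if_neg (one_ne_neg_one' hm), vv_one hm, sub_self, vv_zero hm]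
    norm_num
  · rcases eq_or_ne d (-1) with rfl | h2
    · rw [if_neg h1, if_pos rfl, vv_neg_one hm]
      have hv : vv m ((-1 : Fin m) - 1) = 0 := by
        have hval : ((-1 : Fin m) - 1).val = m - 2 := by
          rw [val_sub_one' _ (neg_one_ne_zero' hm), val_neg_one']; omega
        unfold vv
        rw [if_neg (by omega), if_neg (by omega)]
      rw [hv]; norm_num
    · rw [if_neg h1, if_neg h2]
      have hd0 : d.val ≠ 0 := fun h => hd ((eq_zero_iff' d).mpr h)
      have hd1 : d.val ≠ 1 := fun h => h1 ((eq_one_iff' hm d).mpr h)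
      have hdm : d.val ≠ m - 1 := fun h => h2 ((eq_neg_one_iff hm d).mpr h)
      have hdlt : d.val < m := d.isLt
      have hv1 : vv m d = 0 := by unfold vv; rw [if_neg hd0, if_neg hdm]
      have hval : (d - 1).val = d.val - 1 := val_sub_one' d hd
      have hv2 : vv m (d - 1) = 0 := by
        unfold vv; rw [if_neg (by omega), if_neg (by omega)]
      rw [hv1, hv2]; norm_num

lemma detA_ne_zero : (circ (vv m) * (circ (vv m))ᵀ + 1).det ≠ 0 := by
  apply det_ne_zero_of_sum_row_lt_diag
  intro k
  set A := circ (vv m) * (circ (vv m))ᵀ + 1 with hA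
  have hAapp : ∀ j, A k j = vv m (k - j) - vv m (k - j - 1) + (if k - j = 0 then 1 else 0) := by
    intro j
    rw [hA, Matrix.add_apply, circ_mulT_apply hm, Matrix.one_apply]
    congr 1
    exact if_congr sub_eq_zero.symm rfl rfl
  set F : Fin m → ℝ := fun d => ‖vv m d - vv m (d - 1) + (if d = 0 then 1 else 0)‖ with hF
  have hnorm : ∀ j, ‖A k j‖ = F (k - j) := fun j => by rw [hAapp j]
  have hFtot : ∑ j, ‖A k j‖ = ∑ d, F d := by
    rw [Finset.sum_congr rfl (fun j _ => hnorm j)]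
    exact Fintype.sum_equiv (Equiv.subLeft k) _ _ (fun x => by simp [Equiv.subLeft])
  have hF0 : F 0 = 3 := by
    show ‖vv m (0:Fin m) - vv m ((0:Fin m) - 1) + (if (0:Fin m) = 0 then 1 else 0)‖ = 3
    rw [if_pos rfl, diag_F hm]
    norm_num
  have hdiag : ‖A k k‖ = 3 := by rw [hnorm k, sub_self, hF0]
  have herase : ∑ j ∈ Finset.univ.erase k, ‖A k j‖ = ∑ d, F d - 3 := by
    rw [← hFtot, ← Finset.sum_erase_add _ _ (Finset.mem_univ k), hdiag]
    ring
  have hFsum : ∑ d, F d = 5 := by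
    rw [← Finset.sum_erase_add _ _ (Finset.mem_univ (0 : Fin m)), hF0]
    have : ∑ d ∈ Finset.univ.erase (0 : Fin m), F d
        = ∑ d ∈ Finset.univ.erase (0 : Fin m),
            ((if d = 1 then 1 else 0) + (if d = -1 then (1:ℝ) else 0)) := by
      refine Finset.sum_congr rfl (fun d hd => ?_)
      show ‖vv m d - vv m (d - 1) + (if d = 0 then 1 else 0)‖ = _
      rw [Real.norm_eq_abs]
      exact offdiag_F hm d (Finset.mem_erase.mp hd).1
    rw [this, Finset.sum_add_distrib,
      Finset.sum_ite_eq' _ (1 : Fin m) (fun _ => (1:ℝ)),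
      Finset.sum_ite_eq' _ (-1 : Fin m) (fun _ => (1:ℝ)),
      if_pos (Finset.mem_erase.mpr ⟨one_ne_zero'' hm, Finset.mem_univ _⟩),
      if_pos (Finset.mem_erase.mpr ⟨neg_one_ne_zero' hm, Finset.mem_univ _⟩)]
    norm_num
  rw [herase, hFsum, hdiag]
  norm_num

end aux


theorem wheel_oriented_incidence_moore_penrose (n : ℕ) (hn : 4 ≤ n)
    (C X Y : Matrix (Fin (n-1)) (Fin (n-1)) ℝ)
    (hC : C = circ (fun k => if k.val = 0 then (1:ℝ) else if k.val = n - 2 then -1 else 0))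
    (hX : X = (C * Cᵀ + 1)⁻¹ * (Jmat (n-1) - (n:ℝ) • (1 : Matrix (Fin (n-1)) (Fin (n-1)) ℝ)))
    (hY : Y = -(Cᵀ * X))
    (N : Matrix (Fin 1 ⊕ Fin (n-1)) (Fin (n-1) ⊕ Fin (n-1)) ℝ)
    (hN : N = Matrix.fromBlocks (Matrix.of fun _ _ => 1) 0 (-1) C)
    (H : Matrix (Fin (n-1) ⊕ Fin (n-1)) (Fin 1 ⊕ Fin (n-1)) ℝ)
    (hH : H = (1 / (n:ℝ)) •
      Matrix.fromBlocks (Matrix.of fun _ _ => 1) X 0 Y) :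
    N * H * N = N ∧ H * N * H = H ∧ (N * H)ᵀ = N * H ∧ (H * N)ᵀ = H * N := by
  haveI : NeZero (n-1) := ⟨by omega⟩
  have hm : 3 ≤ n - 1 := by omega
  have hn0 : (n:ℝ) ≠ 0 := by positivity
  have hcast : ((n-1:ℕ):ℝ) = (n:ℝ) - 1 := by
    rw [Nat.cast_sub (by omega)]; norm_num
  have hCv : C = circ (vv (n-1)) := by
    have h2 : n - 2 = n - 1 - 1 := by omega
    rw [hC, h2]
    rfl
  -- basic sums
  have hrow : ∀ i, ∑ j, C i j = 0 := by rw [hCv]; exact circ_row_sum hm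
  have hcol : ∀ j, ∑ i, C i j = 0 := by rw [hCv]; exact circ_col_sum hm
  set J := Jmat (n-1) with hJdef
  have hJT : Jᵀ = J := by ext i j; rfl
  have hCJ : C * J = 0 := by
    ext i j
    simp only [Matrix.mul_apply, hJdef, Jmat, Matrix.of_apply, mul_one, Matrix.zero_apply]
    exact hrow i
  have hJC : J * C = 0 := by
    ext i j
    simp only [Matrix.mul_apply, hJdef, Jmat, Matrix.of_apply, one_mul, Matrix.zero_apply]
    exact hcol j
  have hCtJ : Cᵀ * J = 0 := by
    ext i j
    simp only [Matrix.mul_apply, hJdef, Jmat, Matrix.of_apply, Matrix.transpose_apply, mul_one,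
      Matrix.zero_apply]
    exact hcol i
  have hJCt : J * Cᵀ = 0 := by
    ext i j
    simp only [Matrix.mul_apply, hJdef, Jmat, Matrix.of_apply, Matrix.transpose_apply, one_mul,
      Matrix.zero_apply]
    exact hrow j
  have hJJ : J * J = ((n-1:ℕ):ℝ) • J := by
    ext i j
    simp only [Matrix.mul_apply, hJdef, Jmat, Matrix.of_apply, mul_one, Matrix.smul_apply,
      smul_eq_mul]
    simp
  set A := C * Cᵀ + 1 with hAdef
  have hdet : A.det ≠ 0 := by rw [hAdef, hCv]; exact detA_ne_zero hm
  have hU : IsUnit A.det := isUnit_iff_ne_zero.mpr hdet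
  have hBA : A⁻¹ * A = 1 := Matrix.nonsing_inv_mul A hU
  have hAB : A * A⁻¹ = 1 := Matrix.mul_nonsing_inv A hU
  have hAT : Aᵀ = A := by
    rw [hAdef, Matrix.transpose_add, Matrix.transpose_one, Matrix.transpose_mul,
      Matrix.transpose_transpose]
  have hAJ : A * J = J := by
    rw [hAdef, Matrix.add_mul, Matrix.one_mul, Matrix.mul_assoc, hCtJ, Matrix.mul_zero, zero_add]
  have hJA : J * A = J := by
    rw [hAdef, Matrix.mul_add, Matrix.mul_one, ← Matrix.mul_assoc, hJC, Matrix.zero_mul, zero_add]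
  have hBJ : A⁻¹ * J = J := by
    conv_lhs => rw [← hAJ, ← Matrix.mul_assoc, hBA, Matrix.one_mul]
  have hJB : J * A⁻¹ = J := by
    conv_lhs => rw [← hJA, Matrix.mul_assoc, hAB, Matrix.mul_one]
  have hBT : (A⁻¹)ᵀ = A⁻¹ := by rw [Matrix.transpose_nonsing_inv, hAT]
  -- X facts
  have hXd : X = A⁻¹ * (J - (n:ℝ) • 1) := hX
  have hAX : A * X = J - (n:ℝ) • 1 := by
    rw [hXd, ← Matrix.mul_assoc, hAB, Matrix.one_mul]
  have hsub : (J - (n:ℝ) • 1) * J = -J := by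
    rw [Matrix.sub_mul, Matrix.smul_mul, Matrix.one_mul, hJJ, hcast, ← sub_smul]
    norm_num
  have hXJ : X * J = -J := by
    rw [hXd, Matrix.mul_assoc, hsub, Matrix.mul_neg, hBJ]
  have hJX : J * X = -J := by
    rw [hXd, ← Matrix.mul_assoc, hJB, Matrix.mul_sub, Matrix.mul_smul, Matrix.mul_one, hJJ,
      hcast, ← sub_smul]
    norm_num
  have hXT : Xᵀ = X := by
    rw [hXd, Matrix.transpose_mul, hBT, Matrix.transpose_sub, hJT, Matrix.transpose_smul,
      Matrix.transpose_one, Matrix.sub_mul, Matrix.mul_sub, Matrix.smul_mul, Matrix.mul_smul,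
      Matrix.one_mul, Matrix.mul_one, hBJ, hJB]
  -- Y facts
  have hYJ : Y * J = 0 := by
    rw [hY, Matrix.neg_mul, Matrix.mul_assoc, hXJ, Matrix.mul_neg, hCtJ, neg_neg]
  -- blocks
  set u : Matrix (Fin 1) (Fin (n-1)) ℝ := Matrix.of fun _ _ => 1 with hu
  set w : Matrix (Fin (n-1)) (Fin 1) ℝ := Matrix.of fun _ _ => 1 with hw
  have hwT : wᵀ = u := by ext i j; rfl
  have huT : uᵀ = w := by ext i j; rfl
  have i0 : Fin (n-1) := ⟨0, by omega⟩
  have hrowX : ∀ i, ∑ k, X i k = -1 := by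
    intro i
    have h := congrFun (congrFun hXJ i) i0
    simpa [Matrix.mul_apply, hJdef, Jmat] using h
  have hcolX : ∀ j, ∑ k, X k j = -1 := by
    intro j
    have h := congrFun (congrFun hJX i0) j
    simpa [Matrix.mul_apply, hJdef, Jmat] using h
  have hrowY : ∀ i, ∑ k, Y i k = 0 := by
    intro i
    have h := congrFun (congrFun hYJ i) i0
    simpa [Matrix.mul_apply, hJdef, Jmat] using h
  have hwu : w * u = J := by
    ext i j
    simp [Matrix.mul_apply, hJdef, Jmat, hu, hw]
  have huw : u * w = ((n-1:ℕ):ℝ) • 1 := by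
    ext i j
    have hij : i = j := Subsingleton.elim i j
    subst hij
    simp [Matrix.mul_apply, Matrix.one_apply, hu, hw, Finset.card_univ]
  have huX : u * X = -u := by
    ext i j
    simp only [Matrix.mul_apply, hu, Matrix.of_apply, one_mul, Matrix.neg_apply]
    rw [hcolX j]
  have hXw : X * w = -w := by
    ext i j
    simp only [Matrix.mul_apply, hw, Matrix.of_apply, mul_one, Matrix.neg_apply]
    rw [hrowX i]
  have huC : u * C = 0 := by
    ext i j
    simp only [Matrix.mul_apply, hu, Matrix.of_apply, one_mul, Matrix.zero_apply]
    exact hcol j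
  have hCw : C * w = 0 := by
    ext i j
    simp only [Matrix.mul_apply, hw, Matrix.of_apply, mul_one, Matrix.zero_apply]
    exact hrow i
  have hYw : Y * w = 0 := by
    ext i j
    simp only [Matrix.mul_apply, hw, Matrix.of_apply, mul_one, Matrix.zero_apply]
    exact hrowY i
  have hJw : J * w = ((n-1:ℕ):ℝ) • w := by
    ext i j
    simp [Matrix.mul_apply, hJdef, Jmat, hw, Finset.card_univ]
  -- C * Y
  have hCY : -X + C * Y = (n:ℝ) • 1 - J := by
    have h1 : C * Y = -((C * Cᵀ) * X) := by
      rw [hY, Matrix.mul_neg, Matrix.mul_assoc]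
    have h2 : (C * Cᵀ) * X + X = J - (n:ℝ) • 1 := by
      rw [← hAX, hAdef, Matrix.add_mul, Matrix.one_mul]
    rw [h1]
    have h3 : -X + -((C * Cᵀ) * X) = -(((C * Cᵀ) * X) + X) := by abel
    rw [h3, h2, neg_sub]
  have hCYalt : C * Y = (n:ℝ) • 1 - J + X := by
    rw [← hCY]; abel
  -- N * H
  have hNH : N * H = (1/(n:ℝ)) • Matrix.fromBlocks (((n-1:ℕ):ℝ) • 1) (-u) (-w)
      ((n:ℝ) • 1 - J) := by
    rw [hN, hH, Matrix.mul_smul, Matrix.fromBlocks_multiply]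
    refine congrArg (fun M => (1/(n:ℝ)) • M) ?_
    rw [Matrix.fromBlocks_inj]
    refine ⟨?_, ?_, ?_, ?_⟩
    · rw [huw, Matrix.zero_mul, add_zero]
    · rw [huX, Matrix.zero_mul, add_zero]
    · rw [Matrix.neg_mul, Matrix.one_mul, Matrix.mul_zero, add_zero]
    · rw [Matrix.neg_mul, Matrix.one_mul, ← hCY]
  -- H * N
  have hHN : H * N = (1/(n:ℝ)) • Matrix.fromBlocks (J - X) (X * C) (-Y) (Y * C) := by
    rw [hN, hH, Matrix.smul_mul, Matrix.fromBlocks_multiply]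
    refine congrArg (fun M => (1/(n:ℝ)) • M) ?_
    rw [Matrix.fromBlocks_inj]
    refine ⟨?_, ?_, ?_, ?_⟩
    · rw [hwu, Matrix.mul_neg, Matrix.mul_one, sub_eq_add_neg]
    · rw [Matrix.mul_zero, zero_add]
    · rw [Matrix.zero_mul, zero_add, Matrix.mul_neg, Matrix.mul_one]
    · rw [Matrix.zero_mul, zero_add]
  -- key products
  have key1 : Matrix.fromBlocks (((n-1:ℕ):ℝ) • 1) (-u) (-w) ((n:ℝ) • 1 - J) * N
      = (n:ℝ) • N := by
    rw [hN, Matrix.fromBlocks_multiply, Matrix.fromBlocks_smul, Matrix.fromBlocks_inj]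
    refine ⟨?_, ?_, ?_, ?_⟩
    · rw [Matrix.smul_mul, Matrix.one_mul, Matrix.neg_mul, Matrix.mul_neg, Matrix.mul_one,
        neg_neg, hcast, sub_smul, one_smul]
      abel
    · rw [Matrix.mul_zero, Matrix.neg_mul, huC, neg_zero, add_zero, smul_zero]
    · rw [Matrix.neg_mul, hwu, Matrix.mul_neg, Matrix.mul_one, smul_neg]
      abel
    · rw [Matrix.mul_zero, zero_add, Matrix.sub_mul, Matrix.smul_mul, Matrix.one_mul, hJC,
        sub_zero]
  have key2 : Matrix.fromBlocks (J - X) (X * C) (-Y) (Y * C)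
        * Matrix.fromBlocks w X 0 Y
      = (n:ℝ) • Matrix.fromBlocks w X 0 Y := by
    rw [Matrix.fromBlocks_multiply, Matrix.fromBlocks_smul, Matrix.fromBlocks_inj]
    refine ⟨?_, ?_, ?_, ?_⟩
    · rw [Matrix.mul_zero, add_zero, Matrix.sub_mul, hJw, hXw, hcast, sub_smul, one_smul]
      abel
    · rw [Matrix.mul_assoc X C Y, hCYalt, Matrix.sub_mul, hJX, Matrix.mul_add X,
        Matrix.mul_sub X, Matrix.mul_smul, Matrix.mul_one, hXJ]
      abel
    · rw [Matrix.mul_zero, add_zero, Matrix.neg_mul, hYw, neg_zero, smul_zero]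
    · rw [Matrix.mul_assoc Y C Y, hCYalt, Matrix.neg_mul,
        Matrix.mul_add Y, Matrix.mul_sub Y, Matrix.mul_smul, Matrix.mul_one, hYJ]
      abel
  refine ⟨?_, ?_, ?_, ?_⟩
  · -- N * H * N = N
    rw [hNH, Matrix.smul_mul, key1, smul_smul, one_div, inv_mul_cancel₀ hn0, one_smul]
  · -- H * N * H = H
    rw [hHN, hH, Matrix.smul_mul, Matrix.mul_smul, key2, smul_smul, smul_smul]
    congr 1
    field_simp
  · -- (N*H)ᵀ = N*H
    rw [hNH, Matrix.transpose_smul, Matrix.fromBlocks_transpose]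
    refine congrArg (fun M => (1/(n:ℝ)) • M) ?_
    rw [Matrix.fromBlocks_inj]
    refine ⟨?_, ?_, ?_, ?_⟩
    · rw [Matrix.transpose_smul, Matrix.transpose_one]
    · rw [Matrix.transpose_neg, hwT]
    · rw [Matrix.transpose_neg, huT]
    · rw [Matrix.transpose_sub, Matrix.transpose_smul, Matrix.transpose_one, hJT]
  · -- (H*N)ᵀ = H*N
    rw [hHN, Matrix.transpose_smul, Matrix.fromBlocks_transpose]
    refine congrArg (fun M => (1/(n:ℝ)) • M) ?_
    rw [Matrix.fromBlocks_inj]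
    refine ⟨?_, ?_, ?_, ?_⟩
    · rw [Matrix.transpose_sub, hJT, hXT]
    · rw [Matrix.transpose_neg, hY, Matrix.transpose_neg, Matrix.transpose_mul, hXT,
        Matrix.transpose_transpose, neg_neg]
    · rw [Matrix.transpose_mul, hXT, hY, neg_neg]
    · rw [hY, Matrix.neg_mul, Matrix.transpose_neg, Matrix.transpose_mul, Matrix.transpose_mul,
        Matrix.transpose_transpose, hXT, Matrix.mul_assoc]
end
end

section
/- Let n ≥ 4, let C be the (n−1)×(n−1) circulant matrix circ(1,0,…,0,−1), let N = [[𝟏ᵀ, 0ᵀ],[−I_{n−1}, C]], X = (CCᵀ + I_{n−1})⁻¹(J_{n−1} − n·I_{n−1}), Y = −CᵀX, and H = (1/n) · [[𝟏, X],[0, Y]]. Then N H = I_n − (1/n)·J_n. -/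
open Matrix

noncomputable section

theorem wheel_oriented_NH (n : ℕ) (hn : 4 ≤ n)
    (C X Y : Matrix (Fin (n-1)) (Fin (n-1)) ℝ)
    (hC : C = circ (fun k => if k.val = 0 then (1:ℝ) else if k.val = n - 2 then -1 else 0))
    (hX : X = (C * Cᵀ + 1)⁻¹ * (Jmat (n-1) - (n:ℝ) • (1 : Matrix (Fin (n-1)) (Fin (n-1)) ℝ)))
    (hY : Y = -(Cᵀ * X))
    (N : Matrix (Fin 1 ⊕ Fin (n-1)) (Fin (n-1) ⊕ Fin (n-1)) ℝ)
    (hN : N = Matrix.fromBlocks (Matrix.of fun _ _ => 1) 0 (-1) C)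
    (H : Matrix (Fin (n-1) ⊕ Fin (n-1)) (Fin 1 ⊕ Fin (n-1)) ℝ)
    (hH : H = (1 / (n:ℝ)) •
      Matrix.fromBlocks (Matrix.of fun _ _ => 1) X 0 Y) :
    N * H = 1 - (1 / (n:ℝ)) • (Matrix.of fun _ _ => 1 :
      Matrix (Fin 1 ⊕ Fin (n-1)) (Fin 1 ⊕ Fin (n-1)) ℝ) := by
  haveI : NeZero (n-1) := ⟨by omega⟩
  have hn0 : (n:ℝ) ≠ 0 := by positivity
  -- column sums of C are zero
  have hsumv : ∑ k : Fin (n-1),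
      (if k.val = 0 then (1:ℝ) else if k.val = n-2 then -1 else 0) = 0 := by
    have hptw : ∀ k : Fin (n-1),
        (if k.val = 0 then (1:ℝ) else if k.val = n-2 then -1 else 0)
        = (if k = ⟨0, by omega⟩ then (1:ℝ) else 0)
          + (if k = ⟨n-2, by omega⟩ then (-1:ℝ) else 0) := by
      intro k
      have hk := k.isLt
      split_ifs with h1 h2 h3 h4 h5 <;> simp only [Fin.ext_iff] at * <;> norm_num <;> omega
    rw [Finset.sum_congr rfl fun k _ => hptw k, Finset.sum_add_distrib,
      Finset.sum_ite_eq' Finset.univ, Finset.sum_ite_eq' Finset.univ]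
    simp
  have hcolC : ∀ j, ∑ i, C i j = 0 := by
    intro j
    rw [hC]
    calc ∑ i, circ (fun k => if k.val = 0 then (1:ℝ) else if k.val = n - 2 then -1 else 0) i j
        = ∑ k : Fin (n-1), (if k.val = 0 then (1:ℝ) else if k.val = n-2 then -1 else 0) :=
          Fintype.sum_equiv (Equiv.subLeft j) _ _ (fun i => rfl)
      _ = 0 := hsumv
  -- A = C Cᵀ + 1 is invertible
  have hA : (C * Cᵀ + 1).PosDef :=
    Matrix.PosDef.posSemidef_add (by simpa using Matrix.posSemidef_self_mul_conjTranspose C)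
      Matrix.PosDef.one
  have hAA : (C * Cᵀ + 1) * (C * Cᵀ + 1)⁻¹ = 1 :=
    Matrix.mul_nonsing_inv _ (Ne.isUnit hA.det_pos.ne')
  -- column sums of A are 1
  have hcolA : ∀ j, ∑ i, (C * Cᵀ + 1) i j = 1 := by
    intro j
    have h1 : ∑ i : Fin (n-1), ∑ k : Fin (n-1), C i k * C j k = 0 := by
      rw [Finset.sum_comm]
      simp [← Finset.sum_mul, hcolC]
    calc ∑ i, (C * Cᵀ + 1) i j
        = ∑ i : Fin (n-1), ((∑ k : Fin (n-1), C i k * C j k)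
            + (1 : Matrix (Fin (n-1)) (Fin (n-1)) ℝ) i j) := by
          simp [Matrix.mul_apply, Matrix.add_apply]
      _ = (∑ i : Fin (n-1), ∑ k : Fin (n-1), C i k * C j k)
            + ∑ i, (1 : Matrix (Fin (n-1)) (Fin (n-1)) ℝ) i j := Finset.sum_add_distrib
      _ = 1 := by rw [h1]; simp [Matrix.one_apply]
  set u : Matrix (Fin 1) (Fin (n-1)) ℝ := Matrix.of fun _ _ => 1 with hu
  have huA : u * (C * Cᵀ + 1) = u := by
    ext a j
    rw [Matrix.mul_apply]
    simp only [hu, Matrix.of_apply, one_mul]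
    exact hcolA j
  have huInv : u * (C * Cᵀ + 1)⁻¹ = u := by
    have h := congrArg (fun M => M * (C * Cᵀ + 1)⁻¹) huA
    simpa [Matrix.mul_assoc, hAA] using h.symm
  have hcolX : ∀ j, ∑ k, X k j = -1 := by
    intro j
    have h2 : u * X = u * (Jmat (n-1) - (n:ℝ) • 1) := by
      rw [hX, ← Matrix.mul_assoc, huInv]
    have h1 : (u * X) 0 j = ∑ k, X k j := by simp [Matrix.mul_apply, hu]
    rw [← h1, h2]
    have hcast : ((n-1:ℕ):ℝ) = (n:ℝ) - 1 := by
      rw [Nat.cast_sub (by omega)]; norm_num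
    simp [Matrix.mul_apply, Matrix.sub_apply, Matrix.smul_apply, Jmat,
      Matrix.one_apply, hu, Finset.sum_sub_distrib, Finset.sum_ite_eq',
      mul_ite, hcast]
    try ring
  have hAX : C * Cᵀ * X + X = Jmat (n-1) - (n:ℝ) • 1 := by
    calc C * Cᵀ * X + X = (C*Cᵀ+1) * X := by rw [Matrix.add_mul, Matrix.one_mul]
      _ = (C*Cᵀ+1) * ((C*Cᵀ+1)⁻¹ * (Jmat (n-1) - (n:ℝ)•1)) := by rw [hX]
      _ = _ := by rw [← Matrix.mul_assoc, hAA, Matrix.one_mul]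
  have hBR : -X + C * Y = (n:ℝ) • (1 : Matrix (Fin (n-1)) (Fin (n-1)) ℝ) - Jmat (n-1) := by
    rw [hY, Matrix.mul_neg, ← Matrix.mul_assoc]
    have h3 : C * Cᵀ * X = Jmat (n-1) - (n:ℝ) • 1 - X := by rw [← hAX]; abel
    rw [h3]; abel
  -- final computation
  subst hN hH
  rw [Matrix.mul_smul]
  ext i j
  rcases i with i | i <;> rcases j with j | j <;>
    simp only [Matrix.smul_apply, Matrix.mul_apply, Fintype.sum_sum_type,
      Matrix.fromBlocks_apply₁₁, Matrix.fromBlocks_apply₁₂,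
      Matrix.fromBlocks_apply₂₁, Matrix.fromBlocks_apply₂₂,
      Matrix.of_apply, Matrix.zero_apply, Matrix.sub_apply, Matrix.one_apply,
      Matrix.neg_apply, smul_eq_mul]
  · -- inl inl
    have hcast : ((n-1:ℕ):ℝ) = (n:ℝ) - 1 := by rw [Nat.cast_sub (by omega)]; norm_num
    have hs : ∑ x : Fin (n-1), u i x * 1 = (n:ℝ) - 1 := by simp [hu, hcast]
    rw [hs, Subsingleton.elim i j, if_pos rfl]
    simp only [zero_mul, Finset.sum_const_zero, add_zero, mul_one]
    field_simp
  · -- inl inr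
    have hs : ∑ x : Fin (n-1), u i x * X x j = -1 := by simpa [hu] using hcolX j
    rw [hs, if_neg (by simp)]
    simp only [zero_mul, Finset.sum_const_zero, add_zero, mul_one]
    ring
  · -- inr inl
    have hs : ∑ x : Fin (n-1), (-if i = x then (1:ℝ) else 0) * 1 = -1 := by
      simp [Finset.sum_ite_eq]
    rw [hs, if_neg (by simp)]
    simp only [mul_zero, Finset.sum_const_zero, add_zero, mul_one]
    ring
  · -- inr inr
    have hbr := congrFun (congrFun hBR i) j
    simp only [Matrix.add_apply, Matrix.neg_apply, Matrix.sub_apply, Matrix.smul_apply,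
      Matrix.mul_apply, Matrix.one_apply, Jmat, Matrix.of_apply, smul_eq_mul] at hbr
    have h1 : ∑ x : Fin (n-1), (-if i = x then (1:ℝ) else 0) * X x j = -X i j := by
      simp [ite_mul, Finset.sum_ite_eq]
    rw [h1]
    rcases eq_or_ne i j with h | h
    · subst h
      rw [if_pos rfl, mul_one] at hbr
      rw [if_pos rfl, hbr]
      field_simp
    · rw [if_neg h, mul_zero, zero_sub] at hbr
      rw [if_neg (by simpa using h), hbr]
      ring
end
end

section
/- Let n ≥ 4, let C be the (n−1)×(n−1) circulant matrix circ(1,0,…,0,−1), X = (CCᵀ + I_{n−1})⁻¹(J_{n−1} − n·I_{n−1}), and Y = −CᵀX. Then 𝟏ᵀX = −𝟏ᵀ and C Y − X = n·I_{n−1} − J_{n−1}. -/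
open Matrix

noncomputable section

theorem wheel_oriented_X_rowsum_and_CYX (n : ℕ) (hn : 4 ≤ n)
    (C X Y : Matrix (Fin (n-1)) (Fin (n-1)) ℝ)
    (hC : C = circ (fun k => if k.val = 0 then (1:ℝ) else if k.val = n - 2 then -1 else 0))
    (hX : X = (C * Cᵀ + 1)⁻¹ * (Jmat (n-1) - (n:ℝ) • (1 : Matrix (Fin (n-1)) (Fin (n-1)) ℝ)))
    (hY : Y = -(Cᵀ * X)) :
    (Matrix.of fun (_ : Fin 1) (_ : Fin (n-1)) => (1:ℝ)) * X = -(Matrix.of fun (_ : Fin 1) (_ : Fin (n-1)) => (1:ℝ)) ∧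
      C * Y - X = (n:ℝ) • (1 : Matrix (Fin (n-1)) (Fin (n-1)) ℝ) - Jmat (n-1) := by
  haveI : NeZero (n-1) := ⟨by omega⟩
  set v : Fin (n-1) → ℝ :=
    fun k => if k.val = 0 then (1:ℝ) else if k.val = n - 2 then -1 else 0 with hv
  -- sum of defining vector is 0
  have hsumv : ∑ k : Fin (n-1), v k = 0 := by
    have hval : ∀ k : Fin (n-1),
        v k = (if k = (⟨0, by omega⟩ : Fin (n-1)) then (1:ℝ) else 0) +
              (if k = (⟨n-2, by omega⟩ : Fin (n-1)) then (-1:ℝ) else 0) := by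
      intro k
      simp only [hv, Fin.ext_iff]
      split_ifs <;> simp_all <;> omega
    rw [Finset.sum_congr rfl (fun k _ => hval k), Finset.sum_add_distrib]
    rw [Finset.sum_ite_eq', Finset.sum_ite_eq']; simp
  -- the all-ones row vector
  set u : Matrix (Fin 1) (Fin (n-1)) ℝ := Matrix.of fun _ _ => 1 with hu
  have huC : u * C = 0 := by
    ext i j
    simp only [hu, hC, circ, Matrix.mul_apply, Matrix.of_apply, one_mul, Matrix.zero_apply]
    calc ∑ k : Fin (n-1), v (j - k) = ∑ k : Fin (n-1), v ((Equiv.subLeft j) k) := rfl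
      _ = ∑ k : Fin (n-1), v k := Equiv.sum_comp (Equiv.subLeft j) v
      _ = 0 := hsumv
  set M : Matrix (Fin (n-1)) (Fin (n-1)) ℝ := C * Cᵀ + 1 with hM
  have hMpd : M.PosDef := by
    have h1 : (C * Cᵀ).PosSemidef := by
      have := Matrix.posSemidef_self_mul_conjTranspose C
      simpa using this
    exact Matrix.PosDef.posSemidef_add h1 Matrix.PosDef.one
  have hMu : IsUnit M.det := hMpd.det_pos.ne'.isUnit
  have hMMinv : M * M⁻¹ = 1 := Matrix.mul_nonsing_inv M hMu
  have huM : u * M = u := by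
    rw [hM, Matrix.mul_add, Matrix.mul_one, ← Matrix.mul_assoc, huC, Matrix.zero_mul, zero_add]
  have huMinv : u * M⁻¹ = u := by
    calc u * M⁻¹ = (u * M) * M⁻¹ := by rw [huM]
      _ = u * (M * M⁻¹) := Matrix.mul_assoc _ _ _
      _ = u := by rw [hMMinv, Matrix.mul_one]
  constructor
  · rw [hX, ← Matrix.mul_assoc, huMinv, Matrix.mul_sub, Matrix.mul_smul, Matrix.mul_one]
    ext i j
    have hcard : (Finset.univ : Finset (Fin (n-1))).card = n-1 := by simp
    simp only [Matrix.sub_apply, Matrix.mul_apply, hu, Jmat, Matrix.of_apply,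
      Matrix.smul_apply, Matrix.neg_apply, one_mul, smul_eq_mul, mul_one,
      Finset.sum_const, hcard, nsmul_eq_mul]
    have : ((n-1 : ℕ) : ℝ) = (n : ℝ) - 1 := by
      push_cast [Nat.cast_sub (by omega : 1 ≤ n)]; ring
    rw [this]; ring
  · have hCY : C * Y = -((C * Cᵀ) * X) := by
      rw [hY, Matrix.mul_neg, Matrix.mul_assoc]
    have hMX : M * X = Jmat (n-1) - (n:ℝ) • 1 := by
      rw [hX, ← Matrix.mul_assoc, hMMinv, Matrix.one_mul]
    calc C * Y - X = -((C * Cᵀ) * X + X) := by rw [hCY]; abel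
      _ = -(M * X) := by rw [hM, Matrix.add_mul, Matrix.one_mul]
      _ = (n:ℝ) • 1 - Jmat (n-1) := by rw [hMX, neg_sub]

end
end

section
/- Let n > 3 be an integer. The inverse of the n×n circulant matrix circ(3,−1,0,…,0,−1) is the circulant matrix circ(a_0, a_1, …, a_{n−1}) where, for 0 ≤ j ≤ n−1, a_j = (2^{n−j}/√5) · [ (3−√5)^j / (2^n − (3−√5)^n) − (3+√5)^j / (2^n − (3+√5)^n) ]. -/
open Matrix

noncomputable section

private lemma root_mid (x D : ℝ) (k m : ℕ) (hx : x^2 = 6*x - 4) (hD : D ≠ 0) :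
    3 * ((2:ℝ)^(m+1) * x^(k+1) / D) - 2^(m+2) * x^k / D - 2^m * x^(k+2) / D = 0 := by
  field_simp
  linear_combination (-(2^m * x^k)) * hx

private lemma root_mid' (x D : ℝ) (j n : ℕ) (h1 : 1 ≤ j) (h2 : j + 2 ≤ n)
    (hx : x^2 = 6*x - 4) (hD : D ≠ 0) :
    3 * ((2:ℝ)^(n-j) * x^j / D) - 2^(n-(j-1)) * x^(j-1) / D - 2^(n-(j+1)) * x^(j+1) / D = 0 := by
  obtain ⟨k, rfl⟩ : ∃ k, j = k + 1 := ⟨j - 1, by omega⟩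
  obtain ⟨m, rfl⟩ : ∃ m, n = k + m + 2 := ⟨n - k - 2, by omega⟩
  rw [show k + m + 2 - (k+1) = m + 1 from by omega, show k + 1 - 1 = k from by omega,
    show k + m + 2 - k = m + 2 from by omega, show k + 1 + 1 = k + 2 from rfl,
    show k + m + 2 - (k+2) = m from by omega]
  exact root_mid x D k m hx hD

private lemma root_zero' (x : ℝ) (n : ℕ) (hn : 1 ≤ n) (hx : x^2 = 6*x - 4) (hx0 : x ≠ 0)
    (hD : (2:ℝ)^n - x^n ≠ 0) :
    3 * (2:ℝ)^n / ((2:ℝ)^n - x^n) - 2 * x^(n-1) / ((2:ℝ)^n - x^n)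
      - 2^(n-1) * x / ((2:ℝ)^n - x^n) = 2 / x := by
  obtain ⟨m, rfl⟩ : ∃ m, n = m + 1 := ⟨n - 1, by omega⟩
  rw [show m + 1 - 1 = m from by omega]
  field_simp
  linear_combination (-(2^m) : ℝ) * hx

private lemma root_last' (x : ℝ) (n : ℕ) (hn : 2 ≤ n) (hx : x^2 = 6*x - 4)
    (hD : (2:ℝ)^n - x^n ≠ 0) :
    3 * (2 * x^(n-1)) / ((2:ℝ)^n - x^n) - 4 * x^(n-2) / ((2:ℝ)^n - x^n)
      - 2^n / ((2:ℝ)^n - x^n) = -1 := by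
  obtain ⟨m, rfl⟩ : ∃ m, n = m + 2 := ⟨n - 2, by omega⟩
  rw [show m + 2 - 1 = m + 1 from by omega, show m + 2 - 2 = m from by omega]
  field_simp
  linear_combination (-(x^m)) * hx

private lemma circ_mul_circ_entry {m : ℕ} [NeZero m] (u v : Fin m → ℝ) (i j : Fin m) :
    (circ u * circ v) i j = ∑ t : Fin m, u t * v ((j - i) - t) := by
  rw [Matrix.mul_apply]
  rw [← Equiv.sum_comp (Equiv.addRight i) (fun k => circ u i k * circ v k j)]
  apply Finset.sum_congr rfl
  intro t _
  simp only [circ, Matrix.of_apply, Equiv.coe_addRight]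
  rw [add_sub_cancel_right, sub_add_eq_sub_sub, sub_right_comm]

private lemma sum_three {m : ℕ} [NeZero m] (hm : 3 < m) (c : Fin m → ℝ) :
    (∑ t : Fin m, (if (t:ℕ) = 0 then (3:ℝ) else if (t:ℕ) = 1 ∨ (t:ℕ) = m - 1 then -1 else 0) * c t)
      = 3 * c 0 - c 1 - c (-1) := by
  have hv1 : ((1:Fin m):ℕ) = 1 := by rw [Fin.val_one']; exact Nat.mod_eq_of_lt (by omega)
  have hvn : ((-1:Fin m):ℕ) = m - 1 := by
    rw [Fin.neg_def, Fin.val_mk, hv1]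
    exact Nat.mod_eq_of_lt (by omega)
  have key : ∀ t : Fin m, (if (t:ℕ) = 0 then (3:ℝ) else if (t:ℕ) = 1 ∨ (t:ℕ) = m - 1 then -1 else 0) * c t
      = (if t = 0 then 3 * c t else 0) + ((if t = 1 then -(c t) else 0) + (if t = -1 then -(c t) else 0)) := by
    intro t
    by_cases h0 : (t:ℕ) = 0
    · have ht : t = 0 := Fin.ext (by simpa using h0)
      subst ht
      rw [if_pos h0, if_pos rfl, if_neg (fun h => by rw [h, hv1] at h0; omega),
        if_neg (fun h => by rw [h, hvn] at h0; omega)]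
      ring
    · by_cases h1 : (t:ℕ) = 1
      · have ht : t = 1 := Fin.ext (by rw [hv1]; exact h1)
        rw [if_neg h0, if_pos (Or.inl h1), if_neg (fun h => h0 (by rw [h]; rfl)),
          if_pos ht, if_neg (fun h => by rw [ht] at h; rw [h, hvn] at hv1; omega)]
        ring
      · by_cases h2 : (t:ℕ) = m - 1
        · have ht : t = -1 := Fin.ext (by rw [hvn]; exact h2)
          rw [if_neg h0, if_pos (Or.inr h2), if_neg (fun h => h0 (by rw [h]; rfl)),
            if_neg (fun h => by rw [ht] at h; rw [h, hv1] at hvn; omega), if_pos ht]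
          ring
        · rw [if_neg h0, if_neg (by tauto), if_neg (fun h => h0 (by rw [h]; rfl)),
            if_neg (fun h => h1 (by rw [h, hv1])), if_neg (fun h => h2 (by rw [h, hvn]))]
          ring
  rw [Finset.sum_congr rfl (fun t _ => key t)]
  rw [Finset.sum_add_distrib, Finset.sum_add_distrib, Finset.sum_ite_eq' Finset.univ,
    Finset.sum_ite_eq' Finset.univ, Finset.sum_ite_eq' Finset.univ]
  simp only [Finset.mem_univ, if_true]
  ring


theorem circ_3_neg1_neg1_inverse (n : ℕ) (hn : 3 < n)
    (B : Matrix (Fin n) (Fin n) ℝ)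
    (hB : B = circ (fun k : Fin n => if k.val = 0 then (3:ℝ) else
      if k.val = 1 ∨ k.val = n - 1 then -1 else 0)) :
    B⁻¹ = circ (fun j : Fin n => ((2:ℝ) ^ (n - j.val) / Real.sqrt 5) * ((3 - Real.sqrt 5) ^ j.val / ((2:ℝ) ^ n - (3 - Real.sqrt 5) ^ n) - (3 + Real.sqrt 5) ^ j.val / ((2:ℝ) ^ n - (3 + Real.sqrt 5) ^ n))) := by
  haveI : NeZero n := ⟨by omega⟩
  set s : ℝ := Real.sqrt 5 with hs_def
  have hs5 : s ^ 2 = 5 := Real.sq_sqrt (by norm_num)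
  have hs_nonneg : (0:ℝ) ≤ s := Real.sqrt_nonneg 5
  have hs2 : 2 < s := by nlinarith
  have hs3 : s < 3 := by nlinarith
  have hs0 : s ≠ 0 := by nlinarith
  set x : ℝ := 3 - s with hx_def
  set y : ℝ := 3 + s with hy_def
  have hx2 : x ^ 2 = 6 * x - 4 := by rw [hx_def]; nlinarith
  have hy2 : y ^ 2 = 6 * y - 4 := by rw [hy_def]; nlinarith
  have hx_pos : 0 < x := by rw [hx_def]; linarith
  have hx_lt : x < 2 := by rw [hx_def]; linarith
  have hy_gt : 2 < y := by rw [hy_def]; linarith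
  have hx0 : x ≠ 0 := ne_of_gt hx_pos
  have hy0 : y ≠ 0 := by rw [hy_def]; nlinarith
  have hD1 : ((2:ℝ)^n - x^n) ≠ 0 := by
    have : x ^ n < 2 ^ n := pow_lt_pow_left₀ hx_lt (le_of_lt hx_pos) (by omega)
    linarith
  have hD2 : ((2:ℝ)^n - y^n) ≠ 0 := by
    have : (2:ℝ) ^ n < y ^ n := pow_lt_pow_left₀ hy_gt (by norm_num) (by omega)
    linarith
  have hcross : (2 / x - 2 / y) / s = 1 := by
    rw [hx_def, hy_def]
    have h1 : (3:ℝ) - s ≠ 0 := by rw [hx_def] at hx0; exact hx0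
    have h2 : (3:ℝ) + s ≠ 0 := by rw [hy_def] at hy0; exact hy0
    field_simp
    linear_combination s * hs5
  -- Fin val helpers
  have hv1 : ((1:Fin n):ℕ) = 1 := by
    rw [Fin.val_one']; exact Nat.mod_eq_of_lt (by omega)
  have hvn : ((-1:Fin n):ℕ) = n - 1 := by
    rw [Fin.neg_def, Fin.val_mk, hv1]
    exact Nat.mod_eq_of_lt (by omega)
  apply Matrix.inv_eq_right_inv
  rw [hB]
  ext i j
  rw [circ_mul_circ_entry, Matrix.one_apply]
  beta_reduce
  rw [sum_three hn]
  rw [sub_zero, sub_neg_eq_add]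
  by_cases hij : i = j
  · -- diagonal entry : d = 0
    rw [if_pos hij, hij, sub_self, zero_sub, zero_add]
    beta_reduce
    rw [hvn, hv1, Fin.val_zero, Nat.sub_zero, pow_zero, pow_zero, pow_one, pow_one,
      show n - (n-1) = 1 from by omega, pow_one]
    have HX := root_zero' x n (by omega) hx2 hx0 hD1
    have HY := root_zero' y n (by omega) hy2 hy0 hD2
    linear_combination (HX - HY) / s + hcross
  · rw [if_neg hij]
    have hd0 : (j - i : Fin n) ≠ 0 := fun h => hij (sub_eq_zero.mp h).symm
    have hev : ((j - i : Fin n):ℕ) ≠ 0 := fun h => hd0 (Fin.ext h)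
    have hlt : ((j - i : Fin n):ℕ) < n := (j - i).isLt
    have h2 : ((j - i - 1 : Fin n) : ℕ) = ((j - i : Fin n):ℕ) - 1 := by
      rw [Fin.sub_def, Fin.val_mk, hv1,
        show n - 1 + ((j - i : Fin n):ℕ) = (((j - i : Fin n):ℕ) - 1) + n from by omega,
        Nat.add_mod_right]
      exact Nat.mod_eq_of_lt (by omega)
    by_cases hlast : ((j - i : Fin n):ℕ) = n - 1
    · have h1 : ((j - i + 1 : Fin n) : ℕ) = 0 := by
        rw [Fin.add_def, Fin.val_mk, hv1,
          show ((j - i : Fin n):ℕ) + 1 = n from by omega, Nat.mod_self]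
      beta_reduce
      rw [h1, h2, hlast, Nat.sub_zero, pow_zero, pow_zero,
        show n - 1 - 1 = n - 2 from by omega,
        show n - (n-1) = 1 from by omega, show n - (n-2) = 2 from by omega, pow_one]
      have HX := root_last' x n (by omega) hx2 hD1
      have HY := root_last' y n (by omega) hy2 hD2
      linear_combination (HX - HY) / s
    · have h1 : ((j - i + 1 : Fin n) : ℕ) = ((j - i : Fin n):ℕ) + 1 := by
        rw [Fin.add_def, Fin.val_mk, hv1]
        exact Nat.mod_eq_of_lt (by omega)
      beta_reduce
      rw [h1, h2]
      have HX := root_mid' x ((2:ℝ)^n - x^n) ((j - i : Fin n):ℕ) n (by omega) (by omega) hx2 hD1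
      have HY := root_mid' y ((2:ℝ)^n - y^n) ((j - i : Fin n):ℕ) n (by omega) (by omega) hy2 hD2
      linear_combination (HX - HY) / s
end
end
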